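/- arXiv:2405.18237 — 10 statements merged into one kernel-verified Lean document; each statement's English description precedes it below -/
import Mathlib

section
/- Let d ≥ 2, let x be a standard Gaussian random vector in ℝ^d (i.e., x has law N(0, I_d)), let θ̄, θ̄* ∈ ℝ^d be nonzero and non-parallel, set ρ := ⟨θ̄,θ̄*⟩/(‖θ̄‖·‖θ̄*‖) and D := 1 + (1−ρ²)‖θ̄*‖². Then for every ν ≠ 0: E_x[ (2π⟨x,θ̄⟩²)^{−1/2} · exp( −(ν + ⟨x,θ̄*⟩⟨x,θ̄⟩)² / (2⟨x,θ̄⟩²) ) ] = (π‖θ̄‖)^{−1} · D^{−1/2} · exp( −ρ‖θ̄*‖(ν/‖θ̄‖)/D ) · K₀( √(1+‖θ̄*‖²)·|ν|/(‖θ̄‖·D) ). -/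
open MeasureTheory ProbabilityTheory Real
open scoped RealInnerProductSpace

/-- The standard Gaussian measure `N(0, I_d)` on `ℝ^d`, the product of `d`
copies of the standard normal distribution. -/
noncomputable def stdGaussian (d : ℕ) : Measure (EuclideanSpace ℝ (Fin d)) :=
  (Measure.pi fun _ : Fin d => gaussianReal 0 1).map (EuclideanSpace.equiv (Fin d) ℝ).symm

/-- The modified Bessel function of the second kind of order 0:
`K₀ z = ∫₀^∞ exp (-z cosh t) dt`. -/
noncomputable def K0 (z : ℝ) : ℝ := ∫ t in Set.Ioi (0 : ℝ), Real.exp (-z * Real.cosh t)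

lemma integral_exp_quad (a b c : ℝ) (ha : 0 < a) :
    ∫ w : ℝ, Real.exp (-(a*w^2) + b*w + c) = Real.sqrt (π/a) * Real.exp (b^2/(4*a) + c) := by
  have h : ∀ w:ℝ, -(a*w^2) + b*w + c = -a * (w - b/(2*a))^2 + (b^2/(4*a) + c) := by
    intro w; field_simp; ring
  simp_rw [h, Real.exp_add]
  rw [MeasureTheory.integral_mul_const]
  rw [integral_sub_right_eq_self (fun u => Real.exp (-a*u^2)) (b/(2*a))]
  rw [integral_gaussian]

set_option maxHeartbeats 1000000 in
lemma integral_Ioi_K0 {α β : ℝ} (hα : 0 < α) (hβ : 0 < β) :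
    ∫ u in Set.Ioi (0:ℝ), u⁻¹ * Real.exp (-(α*u^2+β/u^2))
      = K0 (2*Real.sqrt (α*β)) := by
  set z := 2*Real.sqrt (α*β) with hz
  set r := Real.sqrt (Real.sqrt (β/α)) with hrdef
  have hba : 0 < β/α := div_pos hβ hα
  have hr : 0 < r := Real.sqrt_pos.2 (Real.sqrt_pos.2 hba)
  have hr2 : r^2 = Real.sqrt (β/α) := Real.sq_sqrt (Real.sqrt_nonneg _)
  have hαr : α * r^2 = Real.sqrt (α*β) := by
    rw [hr2, ← Real.sqrt_sq hα.le, ← Real.sqrt_mul (sq_nonneg α)]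
    congr 1; field_simp; rw [Real.sq_sqrt (sq_nonneg α)]
  have hβr : β / r^2 = Real.sqrt (α*β) := by
    rw [hr2, ← Real.sqrt_sq hβ.le, ← Real.sqrt_div (sq_nonneg β)]
    congr 1; field_simp; rw [Real.sq_sqrt (sq_nonneg β)]
  set f : ℝ → ℝ := fun t => r * Real.exp (t/2) with hf
  have hderiv : ∀ t ∈ (Set.univ : Set ℝ),
      HasDerivWithinAt f (r/2 * Real.exp (t/2)) Set.univ t := by
    intro t _
    have h1 : HasDerivAt (fun t : ℝ => t/2) (1/2) t := (hasDerivAt_id t).div_const 2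
    have h2 := (h1.exp).const_mul r
    rw [show r/2 * Real.exp (t/2) = r * (Real.exp (t/2) * (1/2)) by ring]
    exact h2.hasDerivWithinAt
  have hinj : Set.InjOn f Set.univ := by
    intro a _ b _ hab
    have := mul_left_cancel₀ (ne_of_gt hr) hab
    have := Real.exp_injective this
    linarith
  have himg : f '' Set.univ = Set.Ioi 0 := by
    ext y
    simp only [Set.image_univ, Set.mem_range, Set.mem_Ioi]
    constructor
    · rintro ⟨t, rfl⟩; positivity
    · intro hy
      refine ⟨2 * Real.log (y/r), ?_⟩
      simp only [hf]
      rw [show 2 * Real.log (y/r) / 2 = Real.log (y/r) from by ring,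
        Real.exp_log (div_pos hy hr)]
      field_simp
  rw [← himg, integral_image_eq_integral_abs_deriv_smul MeasurableSet.univ hderiv hinj]
  have hpt : ∀ t : ℝ, |r/2 * Real.exp (t/2)| • ((f t)⁻¹ * Real.exp (-(α*(f t)^2+β/(f t)^2)))
      = 1/2 * Real.exp (-z * Real.cosh t) := by
    intro t
    have he : Real.exp (t/2) ^ 2 = Real.exp t := by
      rw [sq, ← Real.exp_add]; norm_num
    have habs : |r/2 * Real.exp (t/2)| = r/2 * Real.exp (t/2) := abs_of_pos (by positivity)
    have h1 : α*(f t)^2 = Real.sqrt (α*β) * Real.exp t := by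
      simp only [hf]; rw [mul_pow, he, ← mul_assoc, hαr]
    have h2 : β/(f t)^2 = Real.sqrt (α*β) * Real.exp (-t) := by
      simp only [hf]; rw [mul_pow, he, div_mul_eq_div_div, hβr, Real.exp_neg, div_eq_mul_inv]
    rw [habs, smul_eq_mul, h1, h2, Real.cosh_eq, hz]
    have hexp : -(2*Real.sqrt (α*β)) * ((Real.exp t + Real.exp (-t))/2)
        = -(Real.sqrt (α*β)*Real.exp t + Real.sqrt (α*β)*Real.exp (-t)) := by ring
    rw [hexp]
    simp only [hf]
    have hexpne : Real.exp (t/2) ≠ 0 := Real.exp_ne_zero _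
    field_simp
  rw [MeasureTheory.setIntegral_univ]
  rw [MeasureTheory.integral_congr_ae (Filter.Eventually.of_forall hpt)]
  have heven : ∫ x:ℝ, 1/2 * Real.exp (-z * Real.cosh x)
      = 2 * ∫ x in Set.Ioi (0:ℝ), 1/2 * Real.exp (-z*Real.cosh x) := by
    rw [← integral_comp_abs (f := fun x => 1/2 * Real.exp (-z * Real.cosh x))]
    congr 1; ext x; rw [Real.cosh_abs]
  rw [heven, MeasureTheory.integral_const_mul]
  unfold K0
  ring

lemma lintegral_pi_prod {n : ℕ} (f : Fin n → ℝ → ENNReal) (hf : ∀ i, Measurable (f i)) :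
    ∫⁻ y : Fin n → ℝ, ∏ i, f i (y i) ∂(Measure.pi fun _ => (volume : Measure ℝ))
      = ∏ i, ∫⁻ x, f i x := by
  induction n with
  | zero => simp
  | succ n ih =>
    have h := (measurePreserving_piFinSuccAbove
      (fun _ : Fin (n+1) => (volume : Measure ℝ)) 0).symm
      (MeasurableEquiv.piFinSuccAbove (fun _ : Fin (n+1) => ℝ) 0)
    have hF : Measurable fun y : Fin (n+1) → ℝ => ∏ i, f i (y i) :=
      Finset.measurable_prod _ fun i _ => (hf i).comp (measurable_pi_apply i)
    rw [← h.lintegral_comp hF]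
    simp only [MeasurableEquiv.piFinSuccAbove_symm_apply, Fin.insertNthEquiv,
      Equiv.coe_fn_mk, Fin.insertNth_zero, Fin.prod_univ_succ, Fin.cons_zero, Fin.cons_succ,
      Fin.zero_succAbove, cast_eq]
    rw [lintegral_prod_mul (f := fun x => f 0 x) (g := fun y : Fin n → ℝ => ∏ x, f x.succ (y x))
      (hf 0).aemeasurable
      (Finset.measurable_prod _ fun i _ =>
        (hf i.succ).comp (measurable_pi_apply i)).aemeasurable]
    rw [ih (fun i => f i.succ) (fun i => hf i.succ)]

lemma pi_gaussian_eq (n : ℕ) :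
    (Measure.pi fun _ : Fin n => gaussianReal 0 1)
      = (volume : Measure (Fin n → ℝ)).withDensity
          (fun y => ∏ i, gaussianPDF 0 1 (y i)) := by
  refine Measure.pi_eq fun s hs => ?_
  rw [withDensity_apply _ (MeasurableSet.univ_pi hs),
    ← lintegral_indicator (MeasurableSet.univ_pi hs)]
  have hind : ∀ y : Fin n → ℝ,
      (Set.univ.pi s).indicator (fun y => ∏ i, gaussianPDF 0 1 (y i)) y
        = ∏ i, (s i).indicator (gaussianPDF 0 1) (y i) := by
    intro y
    by_cases h : y ∈ Set.univ.pi s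
    · rw [Set.indicator_of_mem h]
      exact Finset.prod_congr rfl fun i _ =>
        (Set.indicator_of_mem (h i (Set.mem_univ i)) _).symm
    · rw [Set.indicator_of_notMem h]
      rw [Set.mem_univ_pi] at h
      push_neg at h
      obtain ⟨i, hi⟩ := h
      exact (Finset.prod_eq_zero (Finset.mem_univ i) (Set.indicator_of_notMem hi _)).symm
  simp_rw [hind]
  rw [volume_pi, lintegral_pi_prod _ (fun i => (measurable_gaussianPDF 0 1).indicator (hs i))]
  refine Finset.prod_congr rfl fun i _ => ?_
  rw [lintegral_indicator (hs i), gaussianReal_of_var_ne_zero 0 one_ne_zero,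
    withDensity_apply _ (hs i)]

lemma map_withDensity_equiv {α β : Type*} [MeasurableSpace α] [MeasurableSpace β]
    (e : α ≃ᵐ β) (μ : Measure α) (g : β → ENNReal) (hg : Measurable g) :
    (μ.withDensity (g ∘ e)).map e = (μ.map e).withDensity g := by
  ext s hs
  rw [Measure.map_apply e.measurable hs, withDensity_apply _ hs,
    withDensity_apply _ (e.measurable hs),
    setLIntegral_map hs hg e.measurable]
  rfl


lemma stdGaussian_eq_withDensity (d : ℕ) :
    stdGaussian d = (volume : Measure (EuclideanSpace ℝ (Fin d))).withDensity
      (fun x => ENNReal.ofReal ((Real.sqrt (2*π))⁻¹ ^ d * Real.exp (-‖x‖^2/2))) := by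
  have hdens : (fun x : EuclideanSpace ℝ (Fin d) => ∏ i, gaussianPDF 0 1 (x i))
      = fun x => ENNReal.ofReal ((Real.sqrt (2*π))⁻¹ ^ d * Real.exp (-‖x‖^2/2)) := by
    funext x
    simp only [gaussianPDF_def]
    rw [← ENNReal.ofReal_prod_of_nonneg (fun i _ => gaussianPDFReal_nonneg 0 1 (x i))
      (f := fun i => gaussianPDFReal 0 1 (x i))]
    congr 1
    have h1 : ∀ i, gaussianPDFReal 0 1 (x i) = (Real.sqrt (2*π))⁻¹ * Real.exp (-(x i)^2/2) := by
      intro i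
      rw [gaussianPDFReal_def]
      norm_num
    simp_rw [h1]
    rw [Finset.prod_mul_distrib, Finset.prod_const, ← Real.exp_sum, Finset.card_univ,
      Fintype.card_fin]
    congr 1
    have hn : ‖x‖^2 = ∑ i, (x i)^2 := by
      rw [EuclideanSpace.norm_eq, Real.sq_sqrt (by positivity)]
      congr 1; funext i; rw [Real.norm_eq_abs, sq_abs]
    rw [hn]
    congr 1
    simp [neg_div, Finset.sum_div]
  have hgmeas : Measurable (fun x : EuclideanSpace ℝ (Fin d) => ∏ i, gaussianPDF 0 1 (x i)) :=
    Finset.measurable_prod _ fun i _ => (measurable_gaussianPDF 0 1).comp ((measurable_pi_apply i).comp (WithLp.measurable_ofLp 2 _))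
  have hcoe : ⇑(EuclideanSpace.equiv (Fin d) ℝ).symm
      = ⇑((MeasurableEquiv.toLp 2 (Fin d → ℝ)).symm).symm := rfl
  have hcompfun : (fun y : Fin d → ℝ => ∏ i, gaussianPDF 0 1 (y i))
      = (fun x : EuclideanSpace ℝ (Fin d) => ∏ i, gaussianPDF 0 1 (x i))
        ∘ ⇑((MeasurableEquiv.toLp 2 (Fin d → ℝ)).symm).symm := rfl
  rw [_root_.stdGaussian, pi_gaussian_eq, hcoe, hcompfun, map_withDensity_equiv _ _ _ hgmeas,
    ((EuclideanSpace.volume_preserving_symm_measurableEquiv_toLp (Fin d)).symm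
      ((MeasurableEquiv.toLp 2 (Fin d → ℝ)).symm)).map_eq, hdens]

lemma stdGaussian_map_isometry {d : ℕ}
    (L : EuclideanSpace ℝ (Fin d) ≃ₗᵢ[ℝ] EuclideanSpace ℝ (Fin d)) :
    (stdGaussian d).map L = stdGaussian d := by
  rw [stdGaussian_eq_withDensity]
  set Φ : EuclideanSpace ℝ (Fin d) → ENNReal :=
    fun x => ENNReal.ofReal ((Real.sqrt (2*π))⁻¹ ^ d * Real.exp (-‖x‖^2/2)) with hΦ
  have hmeas : Measurable Φ := by fun_prop
  set e := L.toHomeomorph.toMeasurableEquiv with he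
  have hcomp : Φ ∘ ⇑e = Φ := by
    funext x
    simp only [Function.comp_apply, hΦ]
    have : ‖e x‖ = ‖x‖ := L.norm_map x
    rw [this]
  calc (volume.withDensity Φ).map ⇑L
      = (volume.withDensity (Φ ∘ ⇑e)).map ⇑e := by rw [hcomp]; rfl
    _ = (volume.map ⇑e).withDensity Φ := map_withDensity_equiv _ _ _ hmeas
    _ = volume.withDensity Φ := by
        rw [show Measure.map ⇑e (volume : Measure (EuclideanSpace ℝ (Fin d))) = volume
          from L.measurePreserving.map_eq]

lemma map_pair_gaussian (m : ℕ) :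
    (Measure.pi fun _ : Fin (m+2) => gaussianReal 0 1).map (fun y => (y 0, y 1))
      = (gaussianReal 0 1).prod (gaussianReal 0 1) := by
  have hmeas : Measurable (fun y : Fin (m+2) → ℝ => (y 0, y 1)) :=
    (measurable_pi_apply 0).prodMk (measurable_pi_apply 1)
  have h10 : (1 : Fin (m+2)) ≠ 0 := by simp [Fin.ext_iff]
  symm
  refine Measure.prod_eq fun s t hs ht => ?_
  rw [Measure.map_apply hmeas (hs.prod ht)]
  have hpre : (fun y : Fin (m+2) → ℝ => (y 0, y 1)) ⁻¹' (s ×ˢ t)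
      = Set.univ.pi (fun i : Fin (m+2) =>
          if i = 0 then s else if i = 1 then t else Set.univ) := by
    ext y
    simp only [Set.mem_preimage, Set.mem_prod, Set.mem_univ_pi]
    constructor
    · rintro ⟨h0, h1⟩ i
      split_ifs with hi0 hi1
      · rwa [hi0]
      · rwa [hi1]
      · trivial
    · intro h
      refine ⟨?_, ?_⟩
      · have := h 0; simpa using this
      · have := h 1
        rw [if_neg h10, if_pos rfl] at this
        exact this
  rw [hpre, Measure.pi_pi]
  rw [← Finset.mul_prod_erase Finset.univ _ (Finset.mem_univ (0 : Fin (m+2)))]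
  rw [← Finset.mul_prod_erase _ _
    (Finset.mem_erase.mpr ⟨h10, Finset.mem_univ (1 : Fin (m+2))⟩)]
  rw [if_pos rfl, if_neg h10, if_pos rfl]
  rw [Finset.prod_eq_one, mul_one]
  intro i hi
  rw [Finset.mem_erase, Finset.mem_erase] at hi
  rw [if_neg hi.2.1, if_neg hi.1]
  exact measure_univ

lemma integrable_exp_quad (a b c : ℝ) (ha : 0 < a) :
    Integrable (fun w : ℝ => Real.exp (-(a*w^2) + b*w + c)) := by
  have h : ∀ w:ℝ, -(a*w^2) + b*w + c = -a * (w - b/(2*a))^2 + (b^2/(4*a) + c) := by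
    intro w; field_simp; ring
  simp_rw [h, Real.exp_add]
  exact ((integrable_exp_neg_mul_sq ha).comp_sub_right (b/(2*a))).mul_const _

lemma K0_nonneg (z : ℝ) : 0 ≤ K0 z :=
  setIntegral_nonneg measurableSet_Ioi fun t _ => (Real.exp_pos _).le

lemma integrable_absinv_exp {a b : ℝ} (ha : 0 < a) (hb : 0 < b) :
    Integrable (fun u : ℝ => |u|⁻¹ * Real.exp (-(a*u^2 + b/u^2))) := by
  have hmaj : Integrable (fun u : ℝ => b⁻¹ * (|u| * Real.exp (-a*u^2))) := by
    have h0 : Integrable (fun u : ℝ => u * Real.exp (-a*u^2)) :=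
      integrable_mul_exp_neg_mul_sq ha
    have h1 := h0.abs
    have : (fun u : ℝ => |u * Real.exp (-a*u^2)|) = fun u : ℝ => |u| * Real.exp (-a*u^2) := by
      funext u; rw [abs_mul, abs_of_pos (Real.exp_pos _)]
    rw [this] at h1
    exact h1.const_mul _
  refine hmaj.mono' ?_ (Filter.Eventually.of_forall fun u => ?_)
  · apply Measurable.aestronglyMeasurable
    fun_prop
  · rw [Real.norm_eq_abs, abs_of_nonneg (by positivity)]
    rcases eq_or_ne u 0 with rfl | hu
    · simp
    · have hu2 : (0:ℝ) < u^2 := by positivity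
      have hle : Real.exp (-(b/u^2)) ≤ u^2/b := by
        rw [Real.exp_neg]
        rw [inv_le_comm₀ (Real.exp_pos _) (by positivity)]
        calc (u^2/b)⁻¹ = b/u^2 := by rw [inv_div]
          _ ≤ Real.exp (b/u^2) := by
              have := Real.add_one_le_exp (b/u^2)
              linarith
      have : Real.exp (-(a*u^2+b/u^2)) = Real.exp (-(a*u^2)) * Real.exp (-(b/u^2)) := by
        rw [← Real.exp_add]; ring_nf
      rw [this]
      have h2 : |u|⁻¹ * (Real.exp (-(a*u^2)) * Real.exp (-(b/u^2)))
          ≤ |u|⁻¹ * (Real.exp (-(a*u^2)) * (u^2/b)) := by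
        apply mul_le_mul_of_nonneg_left _ (by positivity)
        exact mul_le_mul_of_nonneg_left hle (Real.exp_pos _).le
      refine h2.trans (le_of_eq ?_)
      have : |u| ≠ 0 := by simpa using hu
      field_simp
      rw [← sq_abs u]

lemma gaussianPDFReal_zero_one (x : ℝ) :
    gaussianPDFReal 0 1 x = (Real.sqrt (2*π))⁻¹ * Real.exp (-x^2/2) := by
  rw [gaussianPDFReal_def]
  norm_num


set_option maxHeartbeats 2000000 in
/-- For a standard Gaussian vector `x` in `ℝ^d` (`d ≥ 2`) and nonzero
non-parallel `θ̄, θ̄*`, with `ρ` the cosine of their angle and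
`D = 1 + (1-ρ²)‖θ̄*‖²`, for every `ν ≠ 0` the expectation of the density of
`N(-⟪x,θ̄*⟫⟪x,θ̄⟫, ⟪x,θ̄⟫²)` at `ν` equals
`(π‖θ̄‖)⁻¹ D^{-1/2} exp(-ρ‖θ̄*‖(ν/‖θ̄‖)/D) K₀(√(1+‖θ̄*‖²)|ν|/(‖θ̄‖ D))`. -/
theorem gaussian_density_expectation {d : ℕ} (hd : 2 ≤ d)
    (θb θbs : EuclideanSpace ℝ (Fin d)) (hθb : θb ≠ 0) (hθbs : θbs ≠ 0)
    (hpar : ¬ ∃ c : ℝ, θb = c • θbs)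
    (ρ D : ℝ) (hρ : ρ = ⟪θb, θbs⟫ / (‖θb‖ * ‖θbs‖))
    (hD : D = 1 + (1 - ρ ^ 2) * ‖θbs‖ ^ 2)
    (ν : ℝ) (hν : ν ≠ 0) :
    ∫ x, (Real.sqrt (2 * π * ⟪x, θb⟫ ^ 2))⁻¹ *
        Real.exp (-(ν + ⟪x, θbs⟫ * ⟪x, θb⟫) ^ 2 / (2 * ⟪x, θb⟫ ^ 2)) ∂(stdGaussian d)
      = (π * ‖θb‖)⁻¹ * (Real.sqrt D)⁻¹ *
          Real.exp (-(ρ * ‖θbs‖ * (ν / ‖θb‖)) / D) *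
          K0 (Real.sqrt (1 + ‖θbs‖ ^ 2) * |ν| / (‖θb‖ * D)) := by
  obtain ⟨m, rfl⟩ : ∃ m, d = m + 2 := ⟨d - 2, by omega⟩
  clear hd
  have hσ : (0:ℝ) < ‖θb‖ := norm_pos_iff.mpr hθb
  have hT : (0:ℝ) < ‖θbs‖ := norm_pos_iff.mpr hθbs
  set σ := ‖θb‖ with hσdef
  set T := ‖θbs‖ with hTdef
  have hip : ⟪θb, θbs⟫ = ρ * (σ * T) := by rw [hρ]; field_simp
  -- orthonormal frame adapted to θb, θbs
  set e₁ : EuclideanSpace ℝ (Fin (m+2)) := σ⁻¹ • θb with he₁def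
  have he₁ : ‖e₁‖ = 1 := norm_smul_inv_norm hθb
  have h11 : ⟪e₁, e₁⟫ = 1 := by rw [real_inner_self_eq_norm_sq, he₁]; norm_num
  have hip1 : ⟪e₁, θbs⟫ = ρ * T := by
    rw [he₁def, real_inner_smul_left, hip]; field_simp
  set w : EuclideanSpace ℝ (Fin (m+2)) := θbs - (ρ*T) • e₁ with hwdef
  have hwne : w ≠ 0 := by
    intro h
    rw [hwdef, sub_eq_zero] at h
    have hρT : ρ * T ≠ 0 := by
      intro h0
      exact hθbs (by rw [h, h0, zero_smul])
    have hc : ρ * T * σ⁻¹ ≠ 0 := mul_ne_zero hρT (inv_ne_zero hσ.ne')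
    apply hpar
    refine ⟨(ρ * T * σ⁻¹)⁻¹, ?_⟩
    rw [h, he₁def, smul_smul, smul_smul,
      show (ρ*T*σ⁻¹)⁻¹ * (ρ*T) * σ⁻¹ = 1 from by field_simp; exact div_self (left_ne_zero_of_mul hρT), one_smul]
  set τ := ‖w‖ with hτdef
  have hτ : 0 < τ := norm_pos_iff.mpr hwne
  set e₂ : EuclideanSpace ℝ (Fin (m+2)) := τ⁻¹ • w with he₂def
  have he₂ : ‖e₂‖ = 1 := norm_smul_inv_norm hwne
  have h22 : ⟪e₂, e₂⟫ = 1 := by rw [real_inner_self_eq_norm_sq, he₂]; norm_num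
  have h1w : ⟪e₁, w⟫ = 0 := by
    rw [hwdef, inner_sub_right, real_inner_smul_right, h11, hip1]; ring
  have h12 : ⟪e₁, e₂⟫ = 0 := by rw [he₂def, real_inner_smul_right, h1w]; ring
  have hθb2 : θb = σ • e₁ := by
    rw [he₁def, smul_smul, mul_inv_cancel₀ hσ.ne', one_smul]
  have hw2 : τ • e₂ = w := by
    rw [he₂def, smul_smul, mul_inv_cancel₀ hτ.ne', one_smul]
  have hθbs2 : θbs = (ρ*T) • e₁ + τ • e₂ := by
    rw [hw2, hwdef]; abel
  have hτ2 : τ^2 = (1 - ρ^2) * T^2 := by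
    have expand : ⟪w, w⟫ = ⟪θbs,θbs⟫ - (ρ*T)*⟪e₁,θbs⟫
        - ((ρ*T)*⟪e₁,θbs⟫ - (ρ*T)*((ρ*T)*⟪e₁,e₁⟫)) := by
      rw [hwdef]
      simp only [inner_sub_left, inner_sub_right, real_inner_smul_left, real_inner_smul_right]
      try rw [real_inner_comm θbs e₁]
      try ring
    have key : ⟪w, w⟫ = T^2 - (ρ*T)^2 := by
      rw [expand, h11, hip1, real_inner_self_eq_norm_sq]
      ring
    have h78 : τ^2 = ⟪w, w⟫ := by rw [hτdef, real_inner_self_eq_norm_sq]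
    rw [h78, key]; ring
  have hD1 : D = 1 + τ^2 := by rw [hD, hτ2]
  have hD0 : (0:ℝ) < D := by rw [hD1]; positivity
  -- orthonormal basis
  have h01 : (0 : Fin (m+2)) ≠ 1 := by simp [Fin.ext_iff]
  set v : Fin (m+2) → EuclideanSpace ℝ (Fin (m+2)) :=
    fun i => if i = 0 then e₁ else e₂ with hvdef
  have hv0 : v 0 = e₁ := if_pos rfl
  have hv1 : v 1 = e₂ := if_neg h01.symm
  have hortho : Orthonormal ℝ (Set.restrict {0, 1} v) := by
    rw [orthonormal_iff_ite]
    rintro ⟨i, hi⟩ ⟨j, hj⟩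
    change ⟪v i, v j⟫ = _
    rcases (by simpa using hi : i = 0 ∨ i = 1) with rfl|rfl <;>
      rcases (by simpa using hj : j = 0 ∨ j = 1) with rfl|rfl
    · rw [hv0, if_pos rfl]; exact h11
    · rw [hv0, hv1, if_neg (fun hh => h01 (Subtype.ext_iff.mp hh))]; exact h12
    · rw [hv1, hv0, if_neg (fun hh => h01 (Subtype.ext_iff.mp hh).symm), real_inner_comm]
      exact h12
    · rw [hv1, if_pos rfl]; exact h22
  obtain ⟨b, hb⟩ := hortho.exists_orthonormalBasis_extension_of_card_eq
    (by simp [finrank_euclideanSpace_fin])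
  have hb0 : b 0 = e₁ := by
    have := hb 0 (by simp)
    simpa [hvdef] using this
  have hb1 : b 1 = e₂ := by
    have := hb 1 (by simp)
    simpa [hvdef, h01.symm] using this
  -- coordinates
  have r0 : ∀ x : EuclideanSpace ℝ (Fin (m+2)), b.repr x 0 = ⟪x, e₁⟫ := by
    intro x; rw [b.repr_apply_apply, hb0, real_inner_comm]
  have r1 : ∀ x : EuclideanSpace ℝ (Fin (m+2)), b.repr x 1 = ⟪x, e₂⟫ := by
    intro x; rw [b.repr_apply_apply, hb1, real_inner_comm]
  have hcoord1 : ∀ x : EuclideanSpace ℝ (Fin (m+2)), ⟪x, θb⟫ = σ * (b.repr x 0) := by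
    intro x
    rw [hθb2, real_inner_smul_right x e₁ σ, r0]
  have hcoord2 : ∀ x : EuclideanSpace ℝ (Fin (m+2)),
      ⟪x, θbs⟫ = ρ*T*(b.repr x 0) + τ*(b.repr x 1) := by
    intro x
    rw [hθbs2, inner_add_right, real_inner_smul_right x e₁ (ρ*T),
      real_inner_smul_right x e₂ τ, r0, r1]
  -- the map to the 2d gaussian
  set γ := gaussianReal 0 1 with hγdef
  have hmrepr : Measurable (⇑b.repr) := b.repr.continuous.measurable
  have hpairmeas : Measurable
      (fun x : EuclideanSpace ℝ (Fin (m+2)) => (b.repr x 0, b.repr x 1)) :=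
    ((measurable_pi_apply 0).comp ((WithLp.measurable_ofLp 2 _).comp hmrepr)).prodMk ((measurable_pi_apply 1).comp ((WithLp.measurable_ofLp 2 _).comp hmrepr))
  have hmap : (stdGaussian (m+2)).map
      (fun x => (b.repr x 0, b.repr x 1)) = γ.prod γ := by
    have hfun : (fun x : EuclideanSpace ℝ (Fin (m+2)) => (b.repr x 0, b.repr x 1))
        = (fun y : Fin (m+2) → ℝ => (y 0, y 1))
          ∘ (⇑((MeasurableEquiv.toLp 2 (Fin (m+2) → ℝ)).symm) ∘ ⇑b.repr) := rfl
    have hm2 : Measurable (⇑((MeasurableEquiv.toLp 2 (Fin (m+2) → ℝ)).symm) ∘ ⇑b.repr) :=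
      ((MeasurableEquiv.toLp 2 (Fin (m+2) → ℝ)).symm).measurable.comp hmrepr
    have hm3 : Measurable (fun y : Fin (m+2) → ℝ => (y 0, y 1)) :=
      (measurable_pi_apply 0).prodMk (measurable_pi_apply 1)
    rw [hfun, ← Measure.map_map hm3 hm2]
    have hinner : (stdGaussian (m+2)).map
        (⇑((MeasurableEquiv.toLp 2 (Fin (m+2) → ℝ)).symm) ∘ ⇑b.repr)
        = Measure.pi fun _ : Fin (m+2) => γ := by
      have hcoesymm : ⇑(EuclideanSpace.equiv (Fin (m+2)) ℝ).symm
          = ⇑((MeasurableEquiv.toLp 2 (Fin (m+2) → ℝ)).symm).symm := rfl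
      rw [← Measure.map_map ((MeasurableEquiv.toLp 2 (Fin (m+2) → ℝ)).symm).measurable hmrepr,
        stdGaussian_map_isometry b.repr, _root_.stdGaussian, hcoesymm,
        Measure.map_map ((MeasurableEquiv.toLp 2 (Fin (m+2) → ℝ)).symm).measurable
          ((MeasurableEquiv.toLp 2 (Fin (m+2) → ℝ)).symm).symm.measurable,
        MeasurableEquiv.self_comp_symm, Measure.map_id]
    rw [hinner, map_pair_gaussian]
  -- the 2d integrand
  set G : ℝ × ℝ → ℝ := fun p => (Real.sqrt (2*π*(σ*p.1)^2))⁻¹ *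
      Real.exp (-(ν + (ρ*T*p.1 + τ*p.2)*(σ*p.1))^2/(2*(σ*p.1)^2)) with hGdef
  have hGmeas : Measurable G := by fun_prop
  have hGnn : ∀ p, 0 ≤ G p := fun p =>
    mul_nonneg (inv_nonneg.2 (Real.sqrt_nonneg _)) (Real.exp_pos _).le
  -- step 1 : rewrite the integrand
  have step1 : ∫ x, (Real.sqrt (2 * π * ⟪x, θb⟫ ^ 2))⁻¹ *
        Real.exp (-(ν + ⟪x, θbs⟫ * ⟪x, θb⟫) ^ 2 / (2 * ⟪x, θb⟫ ^ 2)) ∂(stdGaussian (m+2))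
      = ∫ x, G (b.repr x 0, b.repr x 1) ∂(stdGaussian (m+2)) := by
    refine integral_congr_ae (Filter.Eventually.of_forall fun x => ?_)
    simp only []
    rw [hcoord1 x, hcoord2 x]
  rw [step1]
  -- step 2 : to lintegral
  rw [integral_eq_lintegral_of_nonneg_ae
    (Filter.Eventually.of_forall fun x => hGnn _)
    (hGmeas.comp hpairmeas).aestronglyMeasurable]
  -- step 3-4 : push to the product measure and use Tonelli
  have step3 : ∫⁻ x, ENNReal.ofReal (G (b.repr x 0, b.repr x 1)) ∂(stdGaussian (m+2))
      = ∫⁻ u, ∫⁻ v', ENNReal.ofReal (G (u, v')) ∂γ ∂γ := by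
    rw [← lintegral_map hGmeas.ennreal_ofReal hpairmeas, hmap,
      lintegral_prod _ (hGmeas.ennreal_ofReal.aemeasurable)]
  rw [step3]
  -- the conditional (inner) integral
  set c : ℝ → ℝ := fun u => ν/(σ*u) + ρ*T*u with hcdef
  set H : ℝ → ℝ := fun u => (2*π)⁻¹ * σ⁻¹ * Real.sqrt (2*π/D) *
    (|u|⁻¹ * Real.exp (-(c u)^2/(2*D))) with hHdef
  have hπ : (0:ℝ) < 2*π := by positivity
  have hinner : ∀ u : ℝ, u ≠ 0 →
      (∫⁻ v', ENNReal.ofReal (G (u, v')) ∂γ) = ENNReal.ofReal (H u) := by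
    intro u hu
    have hsu : σ*u ≠ 0 := mul_ne_zero hσ.ne' hu
    have hGmeasu : Measurable fun v' : ℝ => ENNReal.ofReal (G (u, v')) :=
      (hGmeas.comp (measurable_const.prodMk measurable_id)).ennreal_ofReal
    rw [hγdef, gaussianReal_of_var_ne_zero 0 one_ne_zero,
      lintegral_withDensity_eq_lintegral_mul volume (measurable_gaussianPDF 0 1) hGmeasu]
    have hpt : ∀ v', (gaussianPDF 0 1 * fun v' => ENNReal.ofReal (G (u,v'))) v'
        = ENNReal.ofReal (gaussianPDFReal 0 1 v' * G (u,v')) := by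
      intro v'
      rw [Pi.mul_apply, gaussianPDF_def]
      simp only []
      rw [← ENNReal.ofReal_mul (gaussianPDFReal_nonneg 0 1 v')]
    rw [lintegral_congr hpt]
    set K : ℝ := (2*π)⁻¹ * (σ*|u|)⁻¹ with hKdef
    have hK0 : 0 ≤ K := by rw [hKdef]; positivity
    have hGrw : ∀ v' : ℝ, gaussianPDFReal 0 1 v' * G (u,v')
        = K * Real.exp (-(((1+τ^2)/2)*v'^2) + (-(c u*τ))*v' + (-(c u)^2/2)) := by
      intro v'
      rw [gaussianPDFReal_zero_one]
      have hsqrt : Real.sqrt (2*π*(σ*u)^2) = Real.sqrt (2*π) * (σ*|u|) := by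
        rw [Real.sqrt_mul hπ.le, Real.sqrt_sq_eq_abs, abs_mul, abs_of_pos hσ]
      have hexparg : -(ν + (ρ*T*u + τ*v')*(σ*u))^2/(2*(σ*u)^2)
          = -(c u + τ*v')^2/2 := by
        rw [hcdef]; simp only []; field_simp; ring
      show (Real.sqrt (2*π))⁻¹ * Real.exp (-v'^2/2) * ((Real.sqrt (2*π*(σ*u)^2))⁻¹ *
        Real.exp (-(ν + (ρ*T*u + τ*v')*(σ*u))^2/(2*(σ*u)^2))) = _
      rw [hexparg, hsqrt]
      have h2π : Real.sqrt (2*π) * Real.sqrt (2*π) = 2*π := Real.mul_self_sqrt hπ.le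
      have hexpm : Real.exp (-v'^2/2) * Real.exp (-(c u + τ*v')^2/2)
          = Real.exp (-(((1+τ^2)/2)*v'^2) + (-(c u*τ))*v' + (-(c u)^2/2)) := by
        rw [← Real.exp_add]; congr 1; ring
      rw [mul_inv (Real.sqrt (2*π)) (σ*|u|)]
      have hre : (Real.sqrt (2*π))⁻¹ * Real.exp (-v'^2/2) * ((Real.sqrt (2*π))⁻¹ * (σ*|u|)⁻¹ *
          Real.exp (-(c u + τ*v')^2/2))
          = ((Real.sqrt (2*π))⁻¹*(Real.sqrt (2*π))⁻¹ * (σ*|u|)⁻¹) *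
            (Real.exp (-v'^2/2) * Real.exp (-(c u + τ*v')^2/2)) := by ring
      rw [hre, hexpm]
      congr 1
      rw [← mul_inv, h2π, hKdef]
    rw [lintegral_congr fun v' => congrArg ENNReal.ofReal (hGrw v')]
    have ha : (0:ℝ) < (1+τ^2)/2 := by positivity
    have hint : Integrable (fun v' : ℝ =>
        K * Real.exp (-(((1+τ^2)/2)*v'^2) + (-(c u*τ))*v' + (-(c u)^2/2))) :=
      (integrable_exp_quad _ _ _ ha).const_mul K
    rw [← ofReal_integral_eq_lintegral_ofReal hint
      (Filter.Eventually.of_forall fun v' => mul_nonneg hK0 (Real.exp_pos _).le)]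
    congr 1
    rw [MeasureTheory.integral_const_mul, integral_exp_quad _ _ _ ha]
    rw [hHdef]; simp only []
    have hrw1 : π/((1+τ^2)/2) = 2*π/D := by
      rw [hD1, div_div_eq_mul_div, mul_comm π 2]
    have hrw2 : (-(c u*τ))^2/(4*((1+τ^2)/2)) + (-(c u)^2/2) = -(c u)^2/(2*D) := by
      rw [hD1]; field_simp; ring
    rw [hrw1, hrw2, hKdef, mul_inv σ |u|]
    ring
  -- almost everywhere nonzero
  have hac : γ ≪ volume := by
    rw [hγdef, gaussianReal_of_var_ne_zero 0 one_ne_zero]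
    exact withDensity_absolutelyContinuous _ _
  have hae0 : ∀ᵐ u ∂γ, u ≠ 0 := by
    rw [ae_iff]
    simp only [not_not, Set.setOf_eq_eq_singleton]
    exact hac (measure_singleton 0)
  rw [lintegral_congr_ae (hae0.mono fun u hu => hinner u hu)]
  -- outer integral
  have hHmeas : Measurable fun u => ENNReal.ofReal (H u) := by
    rw [hHdef]; fun_prop
  rw [hγdef, gaussianReal_of_var_ne_zero 0 one_ne_zero,
    lintegral_withDensity_eq_lintegral_mul volume (measurable_gaussianPDF 0 1) hHmeas]
  have hptH : ∀ u, (gaussianPDF 0 1 * fun u => ENNReal.ofReal (H u)) u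
      = ENNReal.ofReal (gaussianPDFReal 0 1 u * H u) := by
    intro u
    rw [Pi.mul_apply, gaussianPDF_def]
    simp only []
    rw [← ENNReal.ofReal_mul (gaussianPDFReal_nonneg 0 1 u)]
  rw [lintegral_congr hptH]
  set α₀ : ℝ := (1+T^2)/(2*D) with hα₀def
  set β₀ : ℝ := ν^2/(2*σ^2*D) with hβ₀def
  have hα₀ : 0 < α₀ := by rw [hα₀def]; positivity
  have hβ₀ : 0 < β₀ := by rw [hβ₀def]; positivity
  set Cf : ℝ := (Real.sqrt (2*π))⁻¹ * ((2*π)⁻¹ * σ⁻¹ * Real.sqrt (2*π/D)) *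
    Real.exp (-(ρ*T*ν/σ)/D) with hCfdef
  have hCf : 0 ≤ Cf := by rw [hCfdef]; positivity
  have hDh : (0:ℝ) < 1+(1-ρ^2)*T^2 := hD ▸ hD0
  have hptout : ∀ u : ℝ, gaussianPDFReal 0 1 u * H u
      = Cf * (|u|⁻¹ * Real.exp (-(α₀*u^2 + β₀/u^2))) := by
    intro u
    rcases eq_or_ne u 0 with rfl|hu
    · rw [hHdef]; simp
    · rw [gaussianPDFReal_zero_one, hHdef]; simp only []
      have hexp : Real.exp (-u^2/2) * Real.exp (-(c u)^2/(2*D))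
          = Real.exp (-(α₀*u^2 + β₀/u^2)) * Real.exp (-(ρ*T*ν/σ)/D) := by
        rw [← Real.exp_add, ← Real.exp_add]
        congr 1
        rw [hcdef, hα₀def, hβ₀def]; simp only []
        rw [hD]
        have hDh' := hDh.ne'
        field_simp
        have hinv : (1 + (1 - ρ^2)*T^2) * (1 + (1 - ρ^2)*T^2)⁻¹ = 1 := mul_inv_cancel₀ hDh'
        linear_combination (u^4*σ^2) * hinv
      have hre : (Real.sqrt (2*π))⁻¹ * Real.exp (-u^2/2) * ((2*π)⁻¹ * σ⁻¹ *
          Real.sqrt (2*π/D) * (|u|⁻¹ * Real.exp (-(c u)^2/(2*D))))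
          = ((Real.sqrt (2*π))⁻¹ * ((2*π)⁻¹ * σ⁻¹ * Real.sqrt (2*π/D))) *
            (|u|⁻¹ * (Real.exp (-u^2/2) * Real.exp (-(c u)^2/(2*D)))) := by ring
      rw [hre, hexp, hCfdef]
      ring
  rw [lintegral_congr fun u => congrArg ENNReal.ofReal (hptout u)]
  have hintout : Integrable (fun u : ℝ => Cf * (|u|⁻¹ * Real.exp (-(α₀*u^2+β₀/u^2)))) :=
    (integrable_absinv_exp hα₀ hβ₀).const_mul Cf
  rw [← ofReal_integral_eq_lintegral_ofReal hintout
    (Filter.Eventually.of_forall fun u => mul_nonneg hCf (by positivity))]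
  rw [ENNReal.toReal_ofReal
    (integral_nonneg fun u => mul_nonneg hCf (by positivity))]
  rw [MeasureTheory.integral_const_mul]
  have hKint : ∫ u : ℝ, |u|⁻¹ * Real.exp (-(α₀*u^2 + β₀/u^2))
      = 2 * K0 (2*Real.sqrt (α₀*β₀)) := by
    calc ∫ u : ℝ, |u|⁻¹ * Real.exp (-(α₀*u^2 + β₀/u^2))
        = ∫ u : ℝ, (fun t : ℝ => t⁻¹ * Real.exp (-(α₀*t^2 + β₀/t^2))) |u| := by
          refine integral_congr_ae (Filter.Eventually.of_forall fun u => ?_)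
          simp only [sq_abs]
      _ = 2 * ∫ t in Set.Ioi (0:ℝ), t⁻¹ * Real.exp (-(α₀*t^2 + β₀/t^2)) :=
          integral_comp_abs (f := fun t : ℝ => t⁻¹ * Real.exp (-(α₀*t^2 + β₀/t^2)))
      _ = 2 * K0 (2*Real.sqrt (α₀*β₀)) := by rw [integral_Ioi_K0 hα₀ hβ₀]
  rw [hKint]
  have hz : 2*Real.sqrt (α₀*β₀) = Real.sqrt (1+T^2) * |ν| / (σ*D) := by
    have h1 : α₀*β₀ = (Real.sqrt (1+T^2) * |ν| / (2*σ*D))^2 := by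
      rw [hα₀def, hβ₀def, div_pow, mul_pow, Real.sq_sqrt (by positivity : (0:ℝ) ≤ 1+T^2), sq_abs]
      field_simp
    rw [h1, Real.sqrt_sq (by positivity)]
    field_simp
  rw [hz, hCfdef]
  have hsD : Real.sqrt (2*π/D) = Real.sqrt (2*π) / Real.sqrt D := Real.sqrt_div hπ.le D
  rw [hsD]
  have hexpeq : -(ρ*T*ν/σ)/D = -(ρ*T*(ν/σ))/D := by ring
  rw [hexpeq]
  have hs2π : Real.sqrt (2*π) ≠ 0 := by positivity
  have hsDne : Real.sqrt D ≠ 0 := by positivity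
  field_simp
end

section
/- For every a with 0 ≤ a < 1, ∫₀^∞ sinh(a·x)·K₀(x) dx = arcsin(a)/√(1−a²); equivalently, (2√(1−a²)/π)·∫₀^∞ sinh(a·x)·K₀(x) dx = 1 − (2/π)·arccos(a). -/
open Real

open MeasureTheory Set Filter Topology

/-- `∫₀^∞ e^{-bx} dx = 1/b`. -/
lemma integral_exp_neg_mul_Ioi_zero {b : ℝ} (hb : 0 < b) :
    (∫ x in Set.Ioi (0 : ℝ), Real.exp (-b * x)) = 1 / b := by
  have hderiv : ∀ x ∈ Set.Ioi (0:ℝ),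
      HasDerivAt (fun x => -Real.exp (-b * x) / b) (Real.exp (-b * x)) x := by
    intro x _
    have h := (((hasDerivAt_id x).const_mul (-b)).exp).neg.div_const b
    refine h.congr_deriv ?_
    field_simp
    rfl
  have htend : Tendsto (fun x => -Real.exp (-b * x) / b) atTop (𝓝 (-0 / b)) := by
    refine Tendsto.div_const (Tendsto.neg ?_) _
    exact Real.tendsto_exp_atBot.comp (tendsto_id.const_mul_atTop_of_neg (by linarith))
  have hcont : ContinuousWithinAt (fun x => -Real.exp (-b * x) / b) (Set.Ici (0:ℝ)) 0 :=
    (Continuous.continuousWithinAt (by continuity))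
  have := integral_Ioi_of_hasDerivAt_of_tendsto hcont hderiv
    (exp_neg_integrableOn_Ioi 0 hb) htend
  rw [this]
  simp [hb.ne']
  ring

lemma sinh_exp_key {a c : ℝ} : ∀ x : ℝ, Real.sinh (a * x) * Real.exp (-c * x)
    = Real.exp (-(c-a) * x) / 2 - Real.exp (-(c+a) * x) / 2 := by
  intro x
  rw [Real.sinh_eq, show -(c-a)*x = a*x + -(c*x) by ring,
    show -(c+a)*x = -(a*x) + -(c*x) by ring, Real.exp_add, Real.exp_add,
    show -c * x = -(c*x) by ring]
  ring

lemma integrable_sinh_exp {a c : ℝ} (ha : 0 ≤ a) (hc : a < c) :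
    MeasureTheory.IntegrableOn
      (fun x => Real.sinh (a * x) * Real.exp (-c * x)) (Set.Ioi (0:ℝ)) := by
  have h1 : (0:ℝ) < c - a := by linarith
  have h2 : (0:ℝ) < c + a := by linarith
  exact (((exp_neg_integrableOn_Ioi 0 h1).div_const 2).sub
    ((exp_neg_integrableOn_Ioi 0 h2).div_const 2)).congr
    (Filter.Eventually.of_forall fun x => (sinh_exp_key x).symm)

lemma integral_sinh_exp {a c : ℝ} (ha : 0 ≤ a) (hc : a < c) :
    (∫ x in Set.Ioi (0:ℝ), Real.sinh (a * x) * Real.exp (-c * x))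
      = a / (c ^ 2 - a ^ 2) := by
  have h1 : (0:ℝ) < c - a := by linarith
  have h2 : (0:ℝ) < c + a := by linarith
  have hne : c ^ 2 - a ^ 2 ≠ 0 := by nlinarith
  simp_rw [sinh_exp_key]
  rw [MeasureTheory.integral_sub ((exp_neg_integrableOn_Ioi 0 h1).div_const 2)
    ((exp_neg_integrableOn_Ioi 0 h2).div_const 2),
    MeasureTheory.integral_div, MeasureTheory.integral_div,
    integral_exp_neg_mul_Ioi_zero h1, integral_exp_neg_mul_Ioi_zero h2]
  field_simp
  ring

/-- The `t`-integrand is integrable. -/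
lemma integrableOn_t {a : ℝ} (ha : 0 ≤ a) (ha1 : a < 1) :
    MeasureTheory.IntegrableOn
      (fun t => a / (Real.cosh t ^ 2 - a ^ 2)) (Set.Ioi (0:ℝ)) := by
  have ha2 : a ^ 2 < 1 := by nlinarith
  have h1a : (0:ℝ) < 1 - a ^ 2 := by linarith
  have hDpos : ∀ t : ℝ, 0 < Real.cosh t ^ 2 - a ^ 2 := by
    intro t
    have := Real.one_le_cosh t
    nlinarith
  have hbound : ∀ t : ℝ, a / (Real.cosh t ^ 2 - a ^ 2)
      ≤ 4 * a / (1 - a ^ 2) * Real.exp (-2 * t) := by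
    intro t
    have hE : (0:ℝ) < Real.exp (2 * t) := Real.exp_pos _
    have hcosh : Real.exp t / 2 ≤ Real.cosh t := by
      rw [Real.cosh_eq]
      nlinarith [Real.exp_pos (-t)]
    have hC2 : Real.exp (2 * t) / 4 ≤ Real.cosh t ^ 2 := by
      rw [two_mul, Real.exp_add]
      nlinarith [Real.exp_pos t, Real.cosh_pos t]
    have hC1 : (1:ℝ) ≤ Real.cosh t ^ 2 := by
      nlinarith [Real.one_le_cosh t, Real.cosh_pos t]
    have hD : (1 - a ^ 2) * Real.exp (2 * t) / 4 ≤ Real.cosh t ^ 2 - a ^ 2 := by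
      nlinarith [mul_le_mul_of_nonneg_left hC2 h1a.le,
        mul_le_mul_of_nonneg_left hC1 (sq_nonneg a)]
    calc a / (Real.cosh t ^ 2 - a ^ 2)
        ≤ a / ((1 - a ^ 2) * Real.exp (2 * t) / 4) :=
          div_le_div_of_nonneg_left ha (by positivity) hD
      _ = 4 * a / (1 - a ^ 2) * Real.exp (-2 * t) := by
          rw [show (-2 : ℝ) * t = -(2*t) by ring, Real.exp_neg]
          field_simp
  have hg : MeasureTheory.IntegrableOn
      (fun t => 4 * a / (1 - a ^ 2) * Real.exp (-2 * t)) (Set.Ioi (0:ℝ)) :=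
    (exp_neg_integrableOn_Ioi 0 (by norm_num : (0:ℝ) < 2)).const_mul _
  refine MeasureTheory.Integrable.mono hg ?_ ?_
  · exact (Continuous.aestronglyMeasurable
      (continuous_const.div (by continuity) (fun t => (hDpos t).ne'))).restrict
  · refine Filter.Eventually.of_forall fun t => ?_
    rw [Real.norm_eq_abs, Real.norm_eq_abs,
      abs_of_nonneg (div_nonneg ha (hDpos t).le),
      abs_of_nonneg (mul_nonneg (div_nonneg (by linarith) h1a.le) (Real.exp_pos _).le)]
    exact hbound t

lemma hasDerivAt_antideriv {a : ℝ} (ha : 0 ≤ a) (ha1 : a < 1) (t : ℝ) :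
    HasDerivAt (fun t => (Real.sqrt (1-a^2))⁻¹ *
      Real.arctan (a / Real.sqrt (1-a^2) * (Real.sinh t / Real.cosh t)))
      (a / (Real.cosh t ^ 2 - a ^ 2)) t := by
  have ha2 : a ^ 2 < 1 := by nlinarith
  have h1a : (0:ℝ) < 1 - a ^ 2 := by linarith
  set s : ℝ := Real.sqrt (1 - a ^ 2) with hs_def
  have hs : 0 < s := Real.sqrt_pos.2 h1a
  have hs2 : s ^ 2 = 1 - a ^ 2 := Real.sq_sqrt h1a.le
  have hDpos : 0 < Real.cosh t ^ 2 - a ^ 2 := by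
    nlinarith [Real.one_le_cosh t]
  have hc := (Real.cosh_pos t).ne'
  have hss : Real.sinh t ^ 2 = Real.cosh t ^ 2 - 1 := by
    have := Real.cosh_sq_sub_sinh_sq t; linarith
  have h1 : HasDerivAt (fun u => Real.sinh u / Real.cosh u)
      ((Real.cosh t * Real.cosh t - Real.sinh t * Real.sinh t) / Real.cosh t ^ 2) t :=
    (Real.hasDerivAt_sinh t).div (Real.hasDerivAt_cosh t) hc
  have h2 := ((Real.hasDerivAt_arctan (a / s * (Real.sinh t / Real.cosh t))).comp t
    (h1.const_mul (a / s))).const_mul s⁻¹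
  refine h2.congr_deriv ?_
  have hCS : Real.cosh t * Real.cosh t - Real.sinh t * Real.sinh t = 1 := by
    nlinarith [Real.cosh_sq_sub_sinh_sq t]
  have h4 : s ^ 2 * Real.cosh t ^ 2 + a ^ 2 * Real.sinh t ^ 2
      = Real.cosh t ^ 2 - a ^ 2 := by rw [hs2, hss]; ring
  have h3 : 1 + (a / s * (Real.sinh t / Real.cosh t)) ^ 2
      = (Real.cosh t ^ 2 - a ^ 2) / (s ^ 2 * Real.cosh t ^ 2) := by
    rw [← h4]
    field_simp
  rw [hCS, h3]
  field_simp

/-- Value of the `t`-integral. -/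
lemma integral_t {a : ℝ} (ha : 0 ≤ a) (ha1 : a < 1) :
    (∫ t in Set.Ioi (0:ℝ), a / (Real.cosh t ^ 2 - a ^ 2))
      = Real.arcsin a / Real.sqrt (1 - a ^ 2) := by
  have ha2 : a ^ 2 < 1 := by nlinarith
  have h1a : (0:ℝ) < 1 - a ^ 2 := by linarith
  set s : ℝ := Real.sqrt (1 - a ^ 2) with hs_def
  have hs : 0 < s := Real.sqrt_pos.2 h1a
  set F : ℝ → ℝ := fun t => s⁻¹ * Real.arctan (a / s * (Real.sinh t / Real.cosh t))
    with hF_def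
  have hderiv : ∀ t : ℝ, HasDerivAt F (a / (Real.cosh t ^ 2 - a ^ 2)) t :=
    fun t => hasDerivAt_antideriv ha ha1 t
  have htanh : Tendsto (fun t => Real.sinh t / Real.cosh t) atTop (𝓝 1) := by
    have heq : ∀ t : ℝ, Real.sinh t / Real.cosh t = 1 - Real.exp (-t) / Real.cosh t := by
      intro t
      have hc := (Real.cosh_pos t).ne'
      have := Real.cosh_sub_sinh t
      field_simp
      linarith
    have hz : Tendsto (fun t : ℝ => Real.exp (-t) / Real.cosh t) atTop (𝓝 0) := by
      apply squeeze_zero (fun t => by positivity)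
        (g := fun t => 2 * Real.exp (-2 * t))
      · intro t
        have hcosh : Real.exp t / 2 ≤ Real.cosh t := by
          rw [Real.cosh_eq]; nlinarith [Real.exp_pos (-t)]
        have h2t : Real.exp (-2 * t) = Real.exp (-t) * Real.exp (-t) := by
          rw [← Real.exp_add]; ring_nf
        rw [div_le_iff₀ (Real.cosh_pos t), h2t]
        have h3 : Real.exp (-t) * Real.exp t = 1 := by
          rw [← Real.exp_add]; simp
        nlinarith [Real.exp_pos (-t), Real.exp_pos t, Real.cosh_pos t]
      · have : Tendsto (fun t : ℝ => Real.exp (-2 * t)) atTop (𝓝 0) :=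
          Real.tendsto_exp_atBot.comp (tendsto_id.const_mul_atTop_of_neg (by norm_num))
        simpa using this.const_mul 2
    have := (tendsto_const_nhds (x := (1:ℝ))).sub hz
    simp only [sub_zero] at this
    exact Tendsto.congr (fun t => (heq t).symm) this
  have hFlim : Tendsto F atTop (𝓝 (s⁻¹ * Real.arctan (a / s))) := by
    have h1 : Tendsto (fun t => a / s * (Real.sinh t / Real.cosh t)) atTop
        (𝓝 (a / s * 1)) := htanh.const_mul _
    rw [mul_one] at h1
    exact ((Real.continuous_arctan.tendsto _).comp h1).const_mul _
  have hF0 : F 0 = 0 := by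
    simp [hF_def, Real.sinh_zero]
  have hint := integral_Ioi_of_hasDerivAt_of_tendsto
    ((hderiv 0).continuousAt.continuousWithinAt) (fun t _ => hderiv t)
    (integrableOn_t ha ha1) hFlim
  rw [hint, hF0, sub_zero]
  have harcsin : Real.arcsin a = Real.arctan (a / s) :=
    Real.arcsin_eq_arctan ⟨by linarith, ha1⟩
  rw [harcsin]
  field_simp

set_option maxHeartbeats 1000000 in
lemma fubini_sinh_exp {a : ℝ} (ha : 0 ≤ a) (ha1 : a < 1) :
    MeasureTheory.Integrable
      (Function.uncurry fun (x t : ℝ) => Real.sinh (a * x) * Real.exp (-Real.cosh t * x))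
      ((volume.restrict (Set.Ioi (0:ℝ))).prod (volume.restrict (Set.Ioi (0:ℝ)))) := by
  have hca : ∀ t : ℝ, a < Real.cosh t := fun t => lt_of_lt_of_le ha1 (Real.one_le_cosh t)
  have hmeas : AEStronglyMeasurable
      (Function.uncurry fun (x t : ℝ) => Real.sinh (a * x) * Real.exp (-Real.cosh t * x))
      ((volume.restrict (Set.Ioi (0:ℝ))).prod (volume.restrict (Set.Ioi (0:ℝ)))) := by
    apply Continuous.aestronglyMeasurable
    apply Continuous.mul
    · exact Real.continuous_sinh.comp (continuous_const.mul continuous_fst)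
    · exact Real.continuous_exp.comp
        ((Real.continuous_cosh.comp continuous_snd).neg.mul continuous_fst)
  refine (MeasureTheory.integrable_prod_iff' hmeas).mpr ⟨?_, ?_⟩
  · refine Filter.Eventually.of_forall fun t => ?_
    simp only [Function.uncurry_apply_pair]
    exact integrable_sinh_exp ha (hca t)
  · have heq : ∀ t : ℝ,
        (∫ x in Set.Ioi (0:ℝ), ‖Real.sinh (a * x) * Real.exp (-Real.cosh t * x)‖)
          = a / (Real.cosh t ^ 2 - a ^ 2) := by
      intro t
      rw [← integral_sinh_exp ha (hca t)]
      apply setIntegral_congr_fun measurableSet_Ioi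
      intro x hx
      have hx0 : (0:ℝ) < x := hx
      dsimp only
      rw [Real.norm_eq_abs, abs_of_nonneg]
      exact mul_nonneg (Real.sinh_nonneg_iff.mpr (by positivity)) (Real.exp_pos _).le
    refine (integrableOn_t ha ha1).congr (Filter.Eventually.of_forall fun t => ?_)
    simp only [Function.uncurry_apply_pair]
    exact (heq t).symm

/-- For `0 ≤ a < 1`, `∫₀^∞ sinh(a x) K₀(x) dx = arcsin a / √(1-a²)`;
equivalently `(2√(1-a²)/π) ∫₀^∞ sinh(a x) K₀(x) dx = 1 - (2/π) arccos a`. -/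
theorem integral_sinh_K0 (a : ℝ) (ha : 0 ≤ a) (ha1 : a < 1) :
    (∫ x in Set.Ioi (0 : ℝ), Real.sinh (a * x) * K0 x)
        = Real.arcsin a / Real.sqrt (1 - a ^ 2) ∧
    (2 * Real.sqrt (1 - a ^ 2) / π) * ∫ x in Set.Ioi (0 : ℝ), Real.sinh (a * x) * K0 x
        = 1 - (2 / π) * Real.arccos a := by
  have ha2 : a ^ 2 < 1 := by nlinarith
  have h1a : (0:ℝ) < 1 - a ^ 2 := by linarith
  have hca : ∀ t : ℝ, a < Real.cosh t := fun t => lt_of_lt_of_le ha1 (Real.one_le_cosh t)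
  have hswap := MeasureTheory.integral_integral_swap (fubini_sinh_exp ha ha1)
  have hmain : (∫ x in Set.Ioi (0 : ℝ), Real.sinh (a * x) * K0 x)
      = Real.arcsin a / Real.sqrt (1 - a ^ 2) := by
    calc (∫ x in Set.Ioi (0 : ℝ), Real.sinh (a * x) * K0 x)
        = ∫ x in Set.Ioi (0:ℝ), ∫ t in Set.Ioi (0:ℝ),
            Real.sinh (a * x) * Real.exp (-Real.cosh t * x) := by
          apply setIntegral_congr_fun measurableSet_Ioi
          intro x _
          simp only [K0]
          rw [← MeasureTheory.integral_const_mul]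
          apply setIntegral_congr_fun measurableSet_Ioi
          intro t _
          dsimp only
          rw [show -x * Real.cosh t = -Real.cosh t * x by ring]
      _ = ∫ t in Set.Ioi (0:ℝ), ∫ x in Set.Ioi (0:ℝ),
            Real.sinh (a * x) * Real.exp (-Real.cosh t * x) := hswap
      _ = ∫ t in Set.Ioi (0:ℝ), a / (Real.cosh t ^ 2 - a ^ 2) := by
          apply setIntegral_congr_fun measurableSet_Ioi
          intro t _
          exact integral_sinh_exp ha (hca t)
      _ = Real.arcsin a / Real.sqrt (1 - a ^ 2) := integral_t ha ha1
  refine ⟨hmain, ?_⟩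
  rw [hmain, Real.arccos_eq_pi_div_two_sub_arcsin]
  have hs : (0:ℝ) < Real.sqrt (1 - a ^ 2) := Real.sqrt_pos.2 h1a
  field_simp
  ring
end

section
/- (Recurrence relation for the sub-optimality angle.) Let θ, θ* ∈ ℝ^d be nonzero with ρ := ⟨θ,θ*⟩/(‖θ‖·‖θ*‖), ρ ≠ ±1, and φ := π/2 − arccos|ρ| ∈ [0, π/2). Define the noiseless population EM update θ′ := (2‖θ*‖/π)·( sgn(ρ)·φ·θ*/‖θ*‖ + cos(φ)·θ/‖θ‖ ), and let ρ′ := ⟨θ′,θ*⟩/(‖θ′‖·‖θ*‖) and φ′ := π/2 − arccos|ρ′|. Then φ′ ∈ [0, π/2) and tan φ′ = tan φ + φ·(tan²φ + 1). -/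
open Real
open scoped RealInnerProductSpace

set_option maxHeartbeats 1600000 in
/-- (Recurrence relation for the sub-optimality angle.)
For nonzero `θ, θ*` with correlation `ρ ≠ ±1` and sub-optimality angle
`φ = π/2 - arccos |ρ| ∈ [0, π/2)`, the noiseless population EM update
`θ' = (2‖θ*‖/π)(sgn(ρ) φ θ*/‖θ*‖ + cos φ θ/‖θ‖)` has sub-optimality angle
`φ' ∈ [0, π/2)` satisfying `tan φ' = tan φ + φ (tan²φ + 1)`. -/
theorem em_angle_recurrence {d : ℕ}
    (θ θs : EuclideanSpace ℝ (Fin d)) (hθ : θ ≠ 0) (hθs : θs ≠ 0)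
    (ρ : ℝ) (hρ : ρ = ⟪θ, θs⟫ / (‖θ‖ * ‖θs‖)) (hρ1 : ρ ≠ 1) (hρ2 : ρ ≠ -1)
    (φ : ℝ) (hφ : φ = π / 2 - Real.arccos |ρ|)
    (θ' : EuclideanSpace ℝ (Fin d))
    (hθ' : θ' = (2 * ‖θs‖ / π) •
        ((Real.sign ρ * φ) • (‖θs‖⁻¹ • θs) + Real.cos φ • (‖θ‖⁻¹ • θ)))
    (ρ' φ' : ℝ) (hρ' : ρ' = ⟪θ', θs⟫ / (‖θ'‖ * ‖θs‖))
    (hφ' : φ' = π / 2 - Real.arccos |ρ'|) :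
    φ' ∈ Set.Ico 0 (π / 2) ∧
    Real.tan φ' = Real.tan φ + φ * (Real.tan φ ^ 2 + 1) := by
  have hπ : (0:ℝ) < π := Real.pi_pos
  have hnθ : (0:ℝ) < ‖θ‖ := norm_pos_iff.mpr hθ
  have hnθs : (0:ℝ) < ‖θs‖ := norm_pos_iff.mpr hθs
  have habs_le : |ρ| ≤ 1 := by
    rw [hρ, abs_div, abs_of_pos (mul_pos hnθ hnθs), div_le_one (mul_pos hnθ hnθs)]
    exact abs_real_inner_le_norm θ θs
  have habs : |ρ| < 1 := by
    rcases habs_le.lt_or_eq with h | h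
    · exact h
    · rcases (abs_eq (by norm_num : (0:ℝ) ≤ 1)).mp h with h | h
      · exact absurd h hρ1
      · exact absurd h hρ2
  have hφ0 : 0 ≤ φ := by
    rw [hφ]
    have := (Real.arccos_le_pi_div_two (x := |ρ|)).mpr (abs_nonneg ρ)
    linarith
  have hφlt : φ < π / 2 := by
    rw [hφ]
    have := Real.arccos_pos.mpr habs
    linarith
  have hsin : Real.sin φ = |ρ| := by
    rw [hφ, Real.sin_pi_div_two_sub, Real.cos_arccos (by linarith [abs_nonneg ρ]) habs_le]
  have hcos : 0 < Real.cos φ := Real.cos_pos_of_mem_Ioo ⟨by linarith, hφlt⟩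
  have hsin0 : 0 ≤ Real.sin φ := hsin ▸ abs_nonneg ρ
  -- sign facts
  have hsρ : Real.sign ρ * Real.sin φ = ρ := by
    rw [hsin]
    rcases lt_trichotomy ρ 0 with h | h | h
    · rw [Real.sign_of_neg h, abs_of_neg h]; ring
    · rw [h]; simp
    · rw [Real.sign_of_pos h, abs_of_pos h]; ring
  have hφρ0 : ρ = 0 → φ = 0 := by
    intro h; rw [hφ, h, abs_zero, Real.arccos_zero]; ring
  have hs2φ : Real.sign ρ ^ 2 * φ ^ 2 = φ ^ 2 := by
    rcases lt_trichotomy ρ 0 with h | h | h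
    · rw [Real.sign_of_neg h]; ring
    · rw [hφρ0 h]; ring
    · rw [Real.sign_of_pos h]; ring
  have hs2s : Real.sign ρ ^ 2 * Real.sin φ = Real.sin φ := by
    rcases lt_trichotomy ρ 0 with h | h | h
    · rw [Real.sign_of_neg h]; ring
    · rw [hsin, h, abs_zero]; ring
    · rw [Real.sign_of_pos h]; ring
  obtain ⟨N, hN⟩ : ∃ N : ℝ, N = φ + Real.sin φ * Real.cos φ := ⟨_, rfl⟩
  obtain ⟨D, hD⟩ : ∃ D : ℝ, D = φ ^ 2 + 2 * φ * Real.sin φ * Real.cos φ + Real.cos φ ^ 2 :=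
    ⟨_, rfl⟩
  have hN0 : 0 ≤ N := by
    rw [hN]; exact add_nonneg hφ0 (mul_nonneg hsin0 hcos.le)
  have hDpos : 0 < D := by
    have h1 : 0 ≤ 2 * φ * Real.sin φ * Real.cos φ :=
      mul_nonneg (mul_nonneg (by linarith) hsin0) hcos.le
    have h2 : 0 < Real.cos φ ^ 2 := pow_pos hcos 2
    have h3 : 0 ≤ φ ^ 2 := sq_nonneg φ
    rw [hD]; linarith
  have hsabsN : |Real.sign ρ| * N = N := by
    rcases lt_trichotomy ρ 0 with h | h | h
    · rw [Real.sign_of_neg h]; norm_num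
    · have hφz := hφρ0 h
      rw [hN, hφz]; simp
    · rw [Real.sign_of_pos h]; norm_num
  have hDN : D - N ^ 2 = Real.cos φ ^ 4 := by
    have h := Real.sin_sq_add_cos_sq φ
    rw [hD, hN]; linear_combination (-(Real.cos φ ^ 2)) * h
  -- inner products
  have hself_s : ⟪θs, θs⟫ = ‖θs‖ ^ 2 := real_inner_self_eq_norm_sq θs
  have hself : ⟪θ, θ⟫ = ‖θ‖ ^ 2 := real_inner_self_eq_norm_sq θ
  have hts : ⟪θ, θs⟫ = ρ * (‖θ‖ * ‖θs‖) := by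
    rw [hρ]; field_simp
  have hst : ⟪θs, θ⟫ = ρ * (‖θ‖ * ‖θs‖) := by rw [real_inner_comm]; exact hts
  have hip : ⟪θ', θs⟫ = (2 * ‖θs‖ / π) * ‖θs‖ * (Real.sign ρ * N) := by
    rw [hθ']
    rw [real_inner_smul_left, inner_add_left, real_inner_smul_left, real_inner_smul_left,
      real_inner_smul_left, real_inner_smul_left, hself_s, hts]
    rw [show Real.sign ρ * N = Real.sign ρ * φ + (Real.sign ρ * Real.sin φ) * Real.cos φ by rw [hN]; ring,
      hsρ]
    field_simp [hnθ.ne', hnθs.ne', hπ.ne']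
  have hipθ : ⟪θ', θ⟫ = (2 * ‖θs‖ / π) * ‖θ‖ * (Real.sign ρ * φ * ρ + Real.cos φ) := by
    rw [hθ']
    rw [real_inner_smul_left, inner_add_left, real_inner_smul_left, real_inner_smul_left,
      real_inner_smul_left, real_inner_smul_left, hself, hst]
    field_simp [hnθ.ne', hnθs.ne', hπ.ne']
  have hip2 : ⟪θ', θ'⟫ = (2 * ‖θs‖ / π) ^ 2 * D := by
    nth_rewrite 2 [hθ']
    rw [real_inner_smul_right, inner_add_right, real_inner_smul_right, real_inner_smul_right,
      real_inner_smul_right, real_inner_smul_right, hip, hipθ]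
    have key : Real.sign ρ * φ * (Real.sign ρ * N) +
        Real.cos φ * (Real.sign ρ * φ * ρ + Real.cos φ) = D := by
      rw [hN, hD]
      linear_combination hs2φ + (2 * φ * Real.cos φ) * hs2s -
        (Real.sign ρ * φ * Real.cos φ) * hsρ
    field_simp [hnθ.ne', hnθs.ne', hπ.ne']
    linear_combination key
  have hc0 : (0:ℝ) ≤ 2 * ‖θs‖ / π := by positivity
  have hnθ' : ‖θ'‖ = (2 * ‖θs‖ / π) * Real.sqrt D := by
    rw [← Real.sqrt_sq (norm_nonneg θ'), ← real_inner_self_eq_norm_sq, hip2,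
      Real.sqrt_mul (sq_nonneg _), Real.sqrt_sq hc0]
  have hsqD : 0 < Real.sqrt D := Real.sqrt_pos.mpr hDpos
  have hρ'v : ρ' = Real.sign ρ * N / Real.sqrt D := by
    rw [hρ', hip, hnθ']
    field_simp [hnθ.ne', hnθs.ne', hπ.ne']
  have habs' : |ρ'| = N / Real.sqrt D := by
    rw [hρ'v, abs_div, abs_of_pos hsqD, abs_mul, abs_of_nonneg hN0, hsabsN]
  have hN2 : N ^ 2 < D := by
    have := pow_pos hcos 4
    linarith [hDN]
  have habs'lt : |ρ'| < 1 := by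
    rw [habs', div_lt_one hsqD]
    exact (Real.lt_sqrt hN0).mpr hN2
  have habs'le : |ρ'| ≤ 1 := habs'lt.le
  have hφ'0 : 0 ≤ φ' := by
    rw [hφ']
    have := (Real.arccos_le_pi_div_two (x := |ρ'|)).mpr (abs_nonneg ρ')
    linarith
  have hφ'lt : φ' < π / 2 := by
    rw [hφ']
    have := Real.arccos_pos.mpr habs'lt
    linarith
  have hsin' : Real.sin φ' = N / Real.sqrt D := by
    rw [hφ', Real.sin_pi_div_two_sub,
      Real.cos_arccos (by linarith [abs_nonneg ρ']) habs'le, habs']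
  have hcos' : Real.cos φ' = Real.cos φ ^ 2 / Real.sqrt D := by
    rw [hφ', Real.cos_pi_div_two_sub, Real.sin_arccos, sq_abs]
    have h1 : ρ' ^ 2 = N ^ 2 / D := by
      rw [← sq_abs, habs', div_pow, Real.sq_sqrt hDpos.le]
    rw [h1, show 1 - N ^ 2 / D = Real.cos φ ^ 4 / D by
        field_simp; linarith [hDN]]
    rw [show Real.cos φ ^ 4 = (Real.cos φ ^ 2) ^ 2 by ring,
      Real.sqrt_div (sq_nonneg _), Real.sqrt_sq (sq_nonneg _)]
  refine ⟨⟨hφ'0, hφ'lt⟩, ?_⟩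
  have hcosφ' : 0 < Real.cos φ' := Real.cos_pos_of_mem_Ioo ⟨by linarith, hφ'lt⟩
  rw [Real.tan_eq_sin_div_cos, Real.tan_eq_sin_div_cos, hsin', hcos']
  have hsc := Real.sin_sq_add_cos_sq φ
  have hstep : N / √D / (Real.cos φ ^ 2 / √D) = N / Real.cos φ ^ 2 := by
    rw [div_div_div_eq]
    rw [mul_comm N (√D)]
    exact mul_div_mul_left _ _ hsqD.ne'
  rw [hstep, hN]
  field_simp
  linear_combination (-φ) * hsc
end

section
/- (Cycloid trajectory.) Let θ, θ* ∈ ℝ^d be nonzero and non-parallel, ρ := ⟨θ,θ*⟩/(‖θ‖·‖θ*‖), φ := π/2 − arccos|ρ|, and ϕ := 2·arccos|ρ| ∈ (0, π]. Let ê₁ := θ*/‖θ*‖ and ê₂ := (θ/‖θ‖ − ρ·ê₁)/√(1−ρ²). Define the noiseless population EM update θ′ := (2‖θ*‖/π)·( sgn(ρ)·φ·ê₁ + cos(φ)·θ/‖θ‖ ), and write θ′/‖θ*‖ = x′·ê₁ + y′·ê₂ (θ′ lies in span{θ, θ*}). Then 1 − sgn(ρ)·x′ = (1/π)·(ϕ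 − sin ϕ) and y′ = (1/π)·(1 − cos ϕ); that is, the EM iterate lies on a cycloid with parameter ‖θ*‖/π in the plane span{θ, θ*}. -/
open Real
open scoped RealInnerProductSpace

/-- (Cycloid trajectory.)  For nonzero, non-parallel `θ, θ*` with
correlation `ρ`, sub-optimality angle `φ = π/2 - arccos |ρ|`, and
`ϕ = 2 arccos |ρ|`, write the noiseless population EM update
`θ' = (2‖θ*‖/π)(sgn(ρ) φ ê₁ + cos φ θ/‖θ‖)` in the orthonormal frame
`ê₁ = θ*/‖θ*‖`, `ê₂ = (θ/‖θ‖ - ρ ê₁)/√(1-ρ²)` as `θ'/‖θ*‖ = x' ê₁ + y' ê₂`.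
Then `1 - sgn(ρ) x' = (ϕ - sin ϕ)/π` and `y' = (1 - cos ϕ)/π`: the iterate lies on a
cycloid with parameter `‖θ*‖/π` in the plane spanned by `θ` and `θ*`. -/
theorem em_cycloid_trajectory {d : ℕ}
    (θ θs : EuclideanSpace ℝ (Fin d)) (hθ : θ ≠ 0) (hθs : θs ≠ 0)
    (hpar : ¬ ∃ c : ℝ, θ = c • θs)
    (ρ : ℝ) (hρ : ρ = ⟪θ, θs⟫ / (‖θ‖ * ‖θs‖))
    (φ ϕ : ℝ) (hφ : φ = π / 2 - Real.arccos |ρ|) (hϕ : ϕ = 2 * Real.arccos |ρ|)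
    (e1 e2 : EuclideanSpace ℝ (Fin d))
    (he1 : e1 = ‖θs‖⁻¹ • θs)
    (he2 : e2 = (Real.sqrt (1 - ρ ^ 2))⁻¹ • (‖θ‖⁻¹ • θ - ρ • e1))
    (θ' : EuclideanSpace ℝ (Fin d))
    (hθ' : θ' = (2 * ‖θs‖ / π) •
        ((Real.sign ρ * φ) • e1 + Real.cos φ • (‖θ‖⁻¹ • θ)))
    (x' y' : ℝ) (hdecomp : θ' = ‖θs‖ • (x' • e1 + y' • e2)) :
    1 - Real.sign ρ * x' = (ϕ - Real.sin ϕ) / π ∧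
    y' = (1 - Real.cos ϕ) / π := by
  have hn : ‖θ‖ ≠ 0 := norm_ne_zero_iff.mpr hθ
  have hns : ‖θs‖ ≠ 0 := norm_ne_zero_iff.mpr hθs
  have habs : |ρ| < 1 := by
    rcases lt_or_eq_of_le (abs_real_inner_div_norm_mul_norm_le_one θs θ) with h | h
    · rw [hρ, real_inner_comm, mul_comm ‖θ‖]; exact h
    · exfalso
      obtain ⟨-, r, -, hr⟩ := (abs_real_inner_div_norm_mul_norm_eq_one_iff θs θ).mp h
      exact hpar ⟨r, hr⟩
  have hρ2 : ρ ^ 2 < 1 := by nlinarith [abs_nonneg ρ, sq_abs ρ]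
  set s : ℝ := Real.sqrt (1 - ρ ^ 2) with hs
  have hs2 : s ^ 2 = 1 - ρ ^ 2 := Real.sq_sqrt (by linarith)
  have hspos : 0 < s := Real.sqrt_pos.mpr (by linarith)
  have hsne : s ≠ 0 := ne_of_gt hspos
  have hinner : ⟪θ, θs⟫ = ρ * (‖θ‖ * ‖θs‖) := by
    rw [hρ]; field_simp
  have h11 : ⟪e1, e1⟫ = (1 : ℝ) := by
    rw [he1, real_inner_smul_left, real_inner_smul_right,
      real_inner_self_eq_norm_mul_norm]
    field_simp
  have hA : ⟪e1, θ⟫ = ρ * ‖θ‖ := by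
    rw [he1, real_inner_smul_left, real_inner_comm, hinner]
    field_simp
  have hB : ⟪θ, e1⟫ = ρ * ‖θ‖ := by rw [real_inner_comm]; exact hA
  have hC : ⟪θ, θ⟫ = ‖θ‖ * ‖θ‖ := real_inner_self_eq_norm_mul_norm θ
  have h12 : ⟪e1, e2⟫ = (0 : ℝ) := by
    rw [he2]
    simp only [inner_sub_right, real_inner_smul_right, hA, h11]
    field_simp
    ring
  have h21 : ⟪e2, e1⟫ = (0 : ℝ) := by rw [real_inner_comm]; exact h12
  have hD : ⟪e2, θ⟫ = s * ‖θ‖ := by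
    rw [he2]
    simp only [inner_sub_left, real_inner_smul_left, hC, hB, hA]
    field_simp
    linear_combination (-1 : ℝ) * hs2
  have h22 : ⟪e2, e2⟫ = (1 : ℝ) := by
    nth_rewrite 2 [he2]
    simp only [inner_sub_right, real_inner_smul_right, hD, h21]
    field_simp
    ring
  have hπ : (π : ℝ) ≠ 0 := Real.pi_ne_zero
  have hx1 : ⟪e1, θ'⟫ = 2 * ‖θs‖ / π * (Real.sign ρ * φ + Real.cos φ * ρ) := by
    rw [hθ']
    simp only [inner_add_right, real_inner_smul_right, h11, hA]
    field_simp
  have hx2 : ⟪e1, θ'⟫ = ‖θs‖ * x' := by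
    rw [hdecomp]
    simp only [inner_add_right, real_inner_smul_right, h11, h12]
    ring
  have hy1 : ⟪e2, θ'⟫ = 2 * ‖θs‖ / π * (Real.cos φ * s) := by
    rw [hθ']
    simp only [inner_add_right, real_inner_smul_right, h21, hD]
    field_simp
    ring
  have hy2 : ⟪e2, θ'⟫ = ‖θs‖ * y' := by
    rw [hdecomp]
    simp only [inner_add_right, real_inner_smul_right, h21, h22]
    ring
  have hxval : x' = 2 / π * (Real.sign ρ * φ + ρ * Real.cos φ) := by
    refine mul_left_cancel₀ hns ?_
    rw [← hx2, hx1]; field_simp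
  have hyval : y' = 2 / π * (Real.cos φ * s) := by
    refine mul_left_cancel₀ hns ?_
    rw [← hy2, hy1]; field_simp
  set α : ℝ := Real.arccos |ρ| with hα
  have hcosα : Real.cos α = |ρ| :=
    Real.cos_arccos (by linarith [abs_nonneg ρ]) (le_of_lt habs)
  have hsinα : Real.sin α = s := by
    rw [hα, Real.sin_arccos, sq_abs]
  have hcosφ : Real.cos φ = Real.sin α := by
    rw [hφ, Real.cos_pi_div_two_sub]
  have hφα : φ = π / 2 - α := hφ
  have hsin2 : Real.sin ϕ = 2 * Real.sin α * Real.cos α := by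
    rw [hϕ, Real.sin_two_mul]
  have hcos2 : Real.cos ϕ = 1 - 2 * Real.sin α ^ 2 := by
    rw [hϕ, Real.cos_two_mul']
    linarith [Real.sin_sq_add_cos_sq α]
  have hϕα : ϕ = 2 * α := hϕ
  constructor
  · rw [hxval, hsin2, hϕα, hcosφ, hsinα, hφα]
    rcases lt_trichotomy ρ 0 with hneg | hzero | hpos
    · rw [Real.sign_of_neg hneg]
      have h' : Real.cos α = -ρ := by rw [hcosα, abs_of_neg hneg]
      rw [h']
      field_simp
      ring
    · subst hzero
      rw [Real.sign_zero]
      have hα2 : α = π / 2 := by rw [hα]; simp [Real.arccos_zero]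
      rw [hα2]
      simp [Real.cos_pi_div_two]
      field_simp
    · rw [Real.sign_of_pos hpos]
      have h' : Real.cos α = ρ := by rw [hcosα, abs_of_pos hpos]
      rw [h']
      field_simp
      ring
  · rw [hyval, hcos2, hcosφ, hsinα]
    field_simp
    ring
end

section
/- (Linear growth of the tangent of the sub-optimality angle.) Let (a_t)_{t ≥ 0} be a real sequence with a₀ > 0 and a_{t+1} = a_t + arctan(a_t)·(a_t² + 1) for all t ≥ 0. Then for every t ≥ 0, a_{t+1} ≥ ((1 + √5)/2)·a_t. Equivalently, if φ⁰ ∈ (0, π/2) and the angles φ^t ∈ (0, π/2) satisfy tan φ^t = tan φ^{t−1} + φ^{t−1}(tan²φ^{t−1} + 1), then tan φ^t ≥ ((1 + √5)/2)·tan φ^{t−1} for all t ≥ 1. -/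
open Real

lemma aux_div_le_arctan {x : ℝ} (hx : 0 ≤ x) : x / (1 + x ^ 2) ≤ Real.arctan x := by
  have hpos : ∀ y : ℝ, (0:ℝ) < 1 + y ^ 2 := fun y => by positivity
  set f : ℝ → ℝ := fun y => Real.arctan y - y / (1 + y ^ 2) with hf
  have hderiv : ∀ y : ℝ, HasDerivAt f (2 * y ^ 2 / (1 + y ^ 2) ^ 2) y := by
    intro y
    have h1 : HasDerivAt (fun y : ℝ => y / (1 + y ^ 2))
        ((1 * (1 + y ^ 2) - y * (2 * y)) / (1 + y ^ 2) ^ 2) y := by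
      have hy : HasDerivAt (fun y : ℝ => y) 1 y := hasDerivAt_id y
      have hd : HasDerivAt (fun y : ℝ => 1 + y ^ 2) (2 * y) y := by
        simpa using ((hasDerivAt_pow 2 y).const_add 1)
      exact hy.div hd (hpos y).ne'
    have h2 := (Real.hasDerivAt_arctan y).sub h1
    refine h2.congr_deriv ?_
    field_simp
    ring
  have hmono : MonotoneOn f (Set.Ici (0:ℝ)) := by
    apply monotoneOn_of_deriv_nonneg (convex_Ici 0)
      (fun y _ => (hderiv y).differentiableAt.continuousAt.continuousWithinAt)
      (fun y _ => ((hderiv y).differentiableAt).differentiableWithinAt)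
    intro y _
    rw [(hderiv y).deriv]
    positivity
  have h0 : f 0 = 0 := by simp [hf]
  have := hmono (Set.self_mem_Ici) (Set.mem_Ici.mpr hx) hx
  rw [h0] at this
  simp only [hf] at this
  linarith [this]

/-- (Linear growth of the tangent of the sub-optimality angle.)
If `a₀ > 0` and `a_{t+1} = a_t + arctan(a_t)(a_t² + 1)`, then
`a_{t+1} ≥ ((1 + √5)/2) a_t` for every `t`. -/
theorem em_tangent_linear_growth (a : ℕ → ℝ) (ha0 : 0 < a 0)
    (hrec : ∀ t : ℕ, a (t + 1) = a t + Real.arctan (a t) * ((a t) ^ 2 + 1)) :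
    ∀ t : ℕ, a (t + 1) ≥ ((1 + Real.sqrt 5) / 2) * a t := by
  have hpos : ∀ t, 0 < a t := by
    intro t
    induction t with
    | zero => exact ha0
    | succ n ih =>
      rw [hrec n]
      have h1 : 0 < Real.arctan (a n) := by
        have := aux_div_le_arctan ih.le
        have h2 : (0:ℝ) < a n / (1 + (a n) ^ 2) := by positivity
        linarith
      nlinarith [sq_nonneg (a n)]
  intro t
  have hp := hpos t
  have hq : (0:ℝ) < 1 + (a t) ^ 2 := by positivity
  have key : Real.arctan (a t) * ((a t) ^ 2 + 1) ≥ a t := by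
    have h := aux_div_le_arctan hp.le
    rw [div_le_iff₀ hq] at h
    nlinarith
  have hsqrt : Real.sqrt 5 ≤ 3 := by
    rw [show (3:ℝ) = Real.sqrt 9 by
      rw [show (9:ℝ) = 3 ^ 2 by norm_num, Real.sqrt_sq (by norm_num)]]
    exact Real.sqrt_le_sqrt (by norm_num)
  have : (1 + Real.sqrt 5) / 2 ≤ 2 := by linarith
  calc ((1 + Real.sqrt 5) / 2) * a t ≤ 2 * a t := by nlinarith
    _ ≤ a (t + 1) := by rw [hrec t]; linarith
end

section
/- (Quadratic convergence of the tangent of the sub-optimality angle.) Let a ≥ 1.5 and define a′ := a + arctan(a)·(a² + 1). Then (π/2)·(a′ − π/4) ≥ [ (π/2)·(a − π/4) ]². Equivalently, if φ^{t−1} ∈ [arctan 1.5, π/2) and tan φ^t = tan φ^{t−1} + φ^{t−1}(tan²φ^{t−1} + 1), then (π/2)(tan φ^t − π/4) ≥ [ (π/2)(tan φ^{t−1} − π/4) ]². -/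
open Real

lemma arctan_le_self' {x : ℝ} (hx : 0 ≤ x) : Real.arctan x ≤ x := by
  calc Real.arctan x ≤ Real.tan (Real.arctan x) :=
        Real.le_tan (by simpa using Real.arctan_strictMono.monotone hx)
          (Real.arctan_lt_pi_div_two x)
    _ = x := Real.tan_arctan x

/-- (Quadratic convergence of the tangent of the sub-optimality
angle.)  If `a ≥ 1.5` and `a' = a + arctan(a)(a² + 1)`, then
`(π/2)(a' - π/4) ≥ ((π/2)(a - π/4))²`. -/
theorem em_tangent_quadratic_convergence (a a' : ℝ) (ha : 1.5 ≤ a)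
    (ha' : a' = a + Real.arctan a * (a ^ 2 + 1)) :
    (π / 2) * (a' - π / 4) ≥ ((π / 2) * (a - π / 4)) ^ 2 := by
  subst ha'
  have ha0 : 0 < a := by linarith
  have hinv : Real.arctan a⁻¹ = π / 2 - Real.arctan a := Real.arctan_inv_of_pos ha0
  have h1 : Real.arctan a⁻¹ ≤ a⁻¹ := arctan_le_self' (by positivity)
  have harc : π / 2 - a⁻¹ ≤ Real.arctan a := by rw [hinv] at h1; linarith
  have h2 : a * (π / 2) - 1 ≤ a * Real.arctan a := by
    have := mul_le_mul_of_nonneg_left harc ha0.le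
    rw [mul_sub, mul_inv_cancel₀ ha0.ne'] at this
    linarith
  have hsq : (0:ℝ) ≤ a ^ 2 + 1 := by positivity
  have h3 : (a * (π / 2) - 1) * (a ^ 2 + 1) ≤ a * Real.arctan a * (a ^ 2 + 1) :=
    mul_le_mul_of_nonneg_right h2 hsq
  have hπl : (3.141592 : ℝ) < π := Real.pi_gt_d6
  have hπu : π < 3.141593 := Real.pi_lt_d6
  have h4 : (π / 2) * ((a * (π / 2) - 1) * (a ^ 2 + 1))
      ≤ (π / 2) * (a * Real.arctan a * (a ^ 2 + 1)) :=
    mul_le_mul_of_nonneg_left h3 (by positivity)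
  have hp2 : (9.86 : ℝ) < π ^ 2 := by nlinarith
  have hp3 : (31 : ℝ) < π ^ 3 := by nlinarith
  have hp4 : π ^ 4 < 97.41 := by nlinarith
  have hE : 0 ≤ π ^ 2 * a / 8 + π ^ 3 * a ^ 2 / 8 - π ^ 4 * a / 64 - π / 2 := by
    nlinarith [mul_nonneg (sub_nonneg.2 hp3.le) (sq_nonneg a),
      mul_nonneg (sub_nonneg.2 hp4.le) ha0.le,
      mul_nonneg (sub_nonneg.2 hp2.le) ha0.le,
      mul_le_mul_of_nonneg_left ha (by linarith : (0:ℝ) ≤ a)]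
  rw [ge_iff_le, ← mul_le_mul_iff_right₀ ha0]
  nlinarith [h4, hE]
end

section
/- (Quadratic contraction of the angle to the optimum.) Let ϕ ∈ (0, 1.18805] and set φ := π/2 − ϕ/2. Define ϕ′ ∈ (0, π) by tan(π/2 − ϕ′/2) = tan(φ) + φ·(tan²(φ) + 1). Then ϕ′ < ϕ²/π. -/
set_option maxHeartbeats 1000000

open Real

private lemma sin_le_poly {t : ℝ} (h0 : 0 ≤ t) (h1 : t ≤ 1) :
    Real.sin t ≤ t - t ^ 3 / 6 + t ^ 4 * (5 / 96) := by
  have h := Real.sin_bound (x := t) (by rwa [abs_of_nonneg h0])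
  rw [abs_of_nonneg h0] at h
  have := (abs_le.mp h).2
  nlinarith [pow_nonneg h0 4, mul_nonneg (pow_nonneg h0 4) (sub_nonneg.mpr h1)]

private lemma sin_ge_poly {t : ℝ} (h0 : 0 ≤ t) (h1 : t ≤ 1) :
    t - t ^ 3 / 6 - t ^ 4 * (5 / 96) ≤ Real.sin t := by
  have h := Real.sin_bound (x := t) (by rwa [abs_of_nonneg h0])
  rw [abs_of_nonneg h0] at h
  have := (abs_le.mp h).1
  nlinarith [pow_nonneg h0 4, mul_nonneg (pow_nonneg h0 4) (sub_nonneg.mpr h1)]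

private lemma cos_le_poly {t : ℝ} (h0 : 0 ≤ t) (h1 : t ≤ 1) :
    Real.cos t ≤ 1 - t ^ 2 / 2 + t ^ 4 * (5 / 96) := by
  have h := Real.cos_bound (x := t) (by rwa [abs_of_nonneg h0])
  rw [abs_of_nonneg h0] at h
  have := (abs_le.mp h).2
  linarith

private lemma cos_ge_poly {t : ℝ} (h0 : 0 ≤ t) (h1 : t ≤ 1) :
    1 - t ^ 2 / 2 - t ^ 4 * (5 / 96) ≤ Real.cos t := by
  have h := Real.cos_bound (x := t) (by rwa [abs_of_nonneg h0])
  rw [abs_of_nonneg h0] at h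
  have := (abs_le.mp h).1
  linarith

private lemma sin_pos_small {t : ℝ} (h0 : 0 < t) (h1 : t ≤ 1) : 0 < Real.sin t := by
  apply Real.sin_pos_of_pos_of_lt_pi h0
  linarith [Real.pi_gt_three]

private lemma cot_lb {t : ℝ} (h0 : 0 < t) (h1 : t ≤ 0.6) :
    1 / t - 0.45 * t < Real.cos t / Real.sin t := by
  have hs := sin_pos_small h0 (by linarith)
  have heq : 1 / t - 0.45 * t = (1 - 0.45 * t ^ 2) / t := by
    field_simp
  rw [heq, div_lt_div_iff₀ h0 hs]
  have hsu := sin_le_poly h0.le (by linarith)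
  have hcl := cos_ge_poly h0.le (by linarith)
  have hA : (1 - 0.45 * t ^ 2) * Real.sin t ≤ (1 - 0.45 * t ^ 2) * (t - t ^ 3 / 6 + t ^ 4 * (5 / 96)) := by
    apply mul_le_mul_of_nonneg_left hsu
    nlinarith
  have hB : t * (1 - t ^ 2 / 2 - t ^ 4 * (5 / 96)) ≤ t * Real.cos t :=
    mul_le_mul_of_nonneg_left hcl h0.le
  have m4 : t ^ 4 ≤ 0.6 * t ^ 3 := by nlinarith [pow_nonneg h0.le 3]
  have m5 : t ^ 5 ≤ 0.36 * t ^ 3 := by nlinarith [pow_nonneg h0.le 3, pow_nonneg h0.le 4, m4]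
  have m6 : (0:ℝ) ≤ t ^ 6 := by positivity
  have m3 : (0:ℝ) < t ^ 3 := by positivity
  nlinarith [hA, hB, m4, m5, m6, m3]

private lemma cot_ub {x : ℝ} (h0 : 0 < x) (h1 : x ≤ 0.23) :
    Real.cos x / Real.sin x < 1 / x - x / 4 := by
  have hs := sin_pos_small h0 (by linarith)
  have heq : 1 / x - x / 4 = (4 - x ^ 2) / (4 * x) := by
    field_simp
  rw [heq, div_lt_div_iff₀ hs (by linarith : (0:ℝ) < 4 * x)]
  have hsl := sin_ge_poly h0.le (by linarith)
  have hcu := cos_le_poly h0.le (by linarith)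
  have hA : Real.cos x * (4 * x) ≤ (1 - x ^ 2 / 2 + x ^ 4 * (5 / 96)) * (4 * x) := by
    apply mul_le_mul_of_nonneg_right hcu; linarith
  have hB : (4 - x ^ 2) * (x - x ^ 3 / 6 - x ^ 4 * (5 / 96)) ≤ (4 - x ^ 2) * Real.sin x := by
    apply mul_le_mul_of_nonneg_left hsl; nlinarith
  have m4 : x ^ 4 ≤ 0.23 * x ^ 3 := by nlinarith [pow_nonneg h0.le 3]
  have m5 : x ^ 5 ≤ 0.0529 * x ^ 3 := by nlinarith [pow_nonneg h0.le 3, pow_nonneg h0.le 4, m4]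
  have m6 : (0:ℝ) ≤ x ^ 6 := by positivity
  have m3 : (0:ℝ) < x ^ 3 := by positivity
  nlinarith [hA, hB, m4, m5, m6, m3]

private lemma sinsq_ub {t : ℝ} (h0 : 0 ≤ t) (h1 : t ≤ 0.6) :
    (1 + t ^ 2 / 4) * Real.sin t ^ 2 ≤ t ^ 2 := by
  have hsl : 0 ≤ Real.sin t := by
    rcases eq_or_lt_of_le h0 with h | h
    · simp [← h]
    · exact (sin_pos_small h (h1.trans (by norm_num))).le
  have hsu := sin_le_poly h0 (by linarith)
  have hsq : Real.sin t ^ 2 ≤ (t - t ^ 3 / 6 + t ^ 4 * (5 / 96)) ^ 2 := by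
    nlinarith
  have hA : (1 + t ^ 2 / 4) * Real.sin t ^ 2 ≤ (1 + t ^ 2 / 4) * (t - t ^ 3 / 6 + t ^ 4 * (5 / 96)) ^ 2 := by
    apply mul_le_mul_of_nonneg_left hsq; nlinarith
  have m5 : t ^ 5 ≤ 0.6 * t ^ 4 := by nlinarith [pow_nonneg h0 4]
  have m6 : t ^ 6 ≤ 0.36 * t ^ 4 := by nlinarith [pow_nonneg h0 4, pow_nonneg h0 5, m5]
  have m7 : t ^ 7 ≤ 0.216 * t ^ 4 := by nlinarith [pow_nonneg h0 4, pow_nonneg h0 6, m6]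
  have m8 : t ^ 8 ≤ 0.1296 * t ^ 4 := by nlinarith [pow_nonneg h0 4, pow_nonneg h0 7, m7]
  have m9 : (0:ℝ) ≤ t ^ 9 := by positivity
  have m10 : t ^ 10 ≤ 0.046656 * t ^ 4 := by
    nlinarith [pow_nonneg h0 4, pow_nonneg h0 9, pow_nonneg h0 8, m8,
      mul_le_mul_of_nonneg_left m8 (mul_nonneg h0 h0)]
  have m4 : (0:ℝ) ≤ t ^ 4 := by positivity
  nlinarith [hA, m5, m6, m7, m8, m9, m10, m4]

/-- (Quadratic contraction of the angle to the optimum.)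
Let `ϕ ∈ (0, 1.18805]`, `φ = π/2 - ϕ/2`, and let `ϕ' ∈ (0, π)` satisfy
`tan(π/2 - ϕ'/2) = tan φ + φ (tan²φ + 1)`.  Then `ϕ' < ϕ²/π`. -/
theorem em_angle_quadratic_contraction (ϕ : ℝ) (hϕ : ϕ ∈ Set.Ioc 0 1.18805)
    (φ : ℝ) (hφ : φ = π / 2 - ϕ / 2)
    (ϕ' : ℝ) (hϕ' : ϕ' ∈ Set.Ioo 0 π)
    (heq : Real.tan (π / 2 - ϕ' / 2) = Real.tan φ + φ * (Real.tan φ ^ 2 + 1)) :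
    ϕ' < ϕ ^ 2 / π := by
  obtain ⟨hϕ0, hϕ1⟩ := hϕ
  obtain ⟨hϕ'0, hϕ'π⟩ := hϕ'
  have hπl : (3.141592 : ℝ) < π := pi_gt_d6
  have hπu : π < 3.141593 := pi_lt_d6
  have hϕ1' : ϕ ≤ 1.18805 := by exact_mod_cast hϕ1
  obtain ⟨t, ht_def⟩ : ∃ t : ℝ, t = ϕ / 2 := ⟨_, rfl⟩
  have ht0 : 0 < t := by rw [ht_def]; positivity
  have ht1 : t ≤ 0.594025 := by rw [ht_def]; linarith
  obtain ⟨x, hx_def⟩ : ∃ x : ℝ, x = ϕ ^ 2 / (2 * π) := ⟨_, rfl⟩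
  have hx0 : 0 < x := by rw [hx_def]; positivity
  have hϕsq : ϕ ^ 2 ≤ 1.18805 ^ 2 := by nlinarith
  have hx1 : x ≤ 0.23 := by
    rw [hx_def, div_le_iff₀ (by positivity)]
    nlinarith
  have hxeq : x = 2 * t ^ 2 / π := by
    rw [hx_def, ht_def]; field_simp
  have hst : 0 < Real.sin t := sin_pos_small ht0 (by linarith)
  have hsx : 0 < Real.sin x := sin_pos_small hx0 (by linarith)
  have htanφ : Real.tan φ = Real.cos t / Real.sin t := by
    rw [hφ, ht_def, Real.tan_pi_div_two_sub, Real.tan_eq_sin_div_cos, inv_div]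
  have htanx : Real.tan (π / 2 - x) = Real.cos x / Real.sin x := by
    rw [Real.tan_pi_div_two_sub, Real.tan_eq_sin_div_cos, inv_div]
  have hsec : Real.tan φ ^ 2 + 1 = 1 / Real.sin t ^ 2 := by
    rw [htanφ]
    field_simp
    exact Real.cos_sq_add_sin_sq t
  have hcotlb := cot_lb ht0 (by linarith)
  have hcotub := cot_ub hx0 hx1
  have hsinsq : 1 / t ^ 2 + 1 / 4 ≤ 1 / Real.sin t ^ 2 := by
    have h := sinsq_ub ht0.le (show t ≤ 0.6 by linarith)
    have hs2 : (0:ℝ) < Real.sin t ^ 2 := by positivity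
    have ht2 : (0:ℝ) < t ^ 2 := by positivity
    have e1 : 1 / t ^ 2 + 1 / 4 = (1 + t ^ 2 / 4) / t ^ 2 := by
      field_simp
      all_goals first
        | exact Or.inl (by ring)
        | exact Or.inl trivial
        | ring
    rw [e1, div_le_div_iff₀ ht2 hs2]
    nlinarith [h]
  have hπt : π * t ≤ 3.141593 * 0.594025 :=
    mul_le_mul hπu.le ht1 ht0.le (by norm_num)
  have hπsq : (3.141592:ℝ) ^ 2 ≤ π ^ 2 :=
    pow_le_pow_left₀ (by norm_num) hπl.le 2
  have h1r : (0:ℝ) < 0.21 * π - t := by linarith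
  have h2r : (0:ℝ) < 1.189 * π - t := by linarith
  have hkey : 0 ≤ π ^ 2 - 5.6 * π * t + 4 * t ^ 2 := by
    nlinarith [mul_pos h1r h2r, hπt, hπsq]
  have harith : 1 / x - x / 4 ≤ (1 / t - 0.45 * t) + (π / 2 - t) * (1 / t ^ 2 + 1 / 4) := by
    have hexp : (1 / t - 0.45 * t) + (π / 2 - t) * (1 / t ^ 2 + 1 / 4) - (1 / x - x / 4)
        = (π ^ 2 - 5.6 * π * t + 4 * t ^ 2) / (8 * π) + (0.25 - 0.25) * t := by
      rw [hxeq]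
      field_simp
      ring
    have hd : 0 ≤ (π ^ 2 - 5.6 * π * t + 4 * t ^ 2) / (8 * π) :=
      div_nonneg hkey (by positivity)
    nlinarith [hexp, hd]
  have hφt : φ = π / 2 - t := by rw [hφ, ht_def]
  have hφpos : 0 < π / 2 - t := by linarith
  have hmain : Real.cos x / Real.sin x < Real.tan φ + φ * (Real.tan φ ^ 2 + 1) := by
    rw [hsec, htanφ, hφt]
    have h1 : (π / 2 - t) * (1 / t ^ 2 + 1 / 4) ≤ (π / 2 - t) * (1 / Real.sin t ^ 2) :=
      mul_le_mul_of_nonneg_left hsinsq hφpos.le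
    calc Real.cos x / Real.sin x < 1 / x - x / 4 := hcotub
      _ ≤ (1 / t - 0.45 * t) + (π / 2 - t) * (1 / t ^ 2 + 1 / 4) := harith
      _ ≤ (1 / t - 0.45 * t) + (π / 2 - t) * (1 / Real.sin t ^ 2) := by linarith
      _ < Real.cos t / Real.sin t + (π / 2 - t) * (1 / Real.sin t ^ 2) := by linarith
  have hmem1 : π / 2 - x ∈ Set.Ioo (-(π / 2)) (π / 2) := by
    constructor <;> [linarith; linarith]
  have hmem2 : π / 2 - ϕ' / 2 ∈ Set.Ioo (-(π / 2)) (π / 2) := by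
    constructor <;> [linarith; linarith]
  have hlt : π / 2 - x < π / 2 - ϕ' / 2 := by
    apply (Real.strictMonoOn_tan.lt_iff_lt hmem1 hmem2).mp
    rw [htanx, heq]
    exact hmain
  have hxlt : ϕ' / 2 < x := by linarith
  have hfin : ϕ ^ 2 / π = 2 * x := by
    rw [hx_def]; field_simp
  linarith [hfin.ge]
end

section
/- (Population-level convergence.) There is an absolute constant C > 0 with the following property. Let θ⁰, θ* ∈ ℝ^d be nonzero with ρ⁰ := ⟨θ⁰,θ*⟩/(‖θ⁰‖·‖θ*‖) satisfying 0 < |ρ⁰| < 1, let ν* ∈ ℝ, and define iterates for t ≥ 0 by θ^{t+1} := (2‖θ*‖/π)·( sgn(ρ^t)·φ^t·θ*/‖θ*‖ + cos(φ^t)·θ^t/‖θ^t‖ ) and tanh(ν^{t+1}) := sgn(ρ⁰)·(2/π)·φ^t·tanh(ν*), where ρ^t := ⟨θ^t,θ*⟩/(‖θ^t‖·‖θ*‖) and φ^t := π/2 − arccos|ρ^t|. Then for every ε ∈ (0, 1/2), for every integer T ≥ C·( log(1/|ρ⁰|) + log log(1/ε) + 1 ), one has ‖θ^{T+1} − sgn(ρ⁰)·θ*‖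 / ‖θ*‖ < ε and |tanh(ν^{T+1}) − sgn(ρ⁰)·tanh(ν*)| ≤ C·√ε·|tanh ν*|. -/
open Real
open scoped RealInnerProductSpace

open Real
open scoped RealInnerProductSpace


namespace EMPop

noncomputable def gN (s : ℝ) : ℝ := arcsin s + s * Real.sqrt (1 - s^2)
noncomputable def gD (s : ℝ) : ℝ :=
  (arcsin s)^2 + (1 - s^2) + 2 * arcsin s * s * Real.sqrt (1 - s^2)
noncomputable def g (s : ℝ) : ℝ := gN s / Real.sqrt (gD s)

lemma self_le_arcsin {s : ℝ} (h0 : 0 ≤ s) (h1 : s ≤ 1) : s ≤ arcsin s := by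
  have h := Real.sin_le (Real.arcsin_nonneg.2 h0)
  rwa [Real.sin_arcsin (by linarith) h1] at h

lemma sqrt_one_sub_sq_nonneg (s : ℝ) : 0 ≤ Real.sqrt (1 - s^2) := Real.sqrt_nonneg _

lemma sq_sqrt_one_sub {s : ℝ} (h1 : s^2 ≤ 1) : Real.sqrt (1 - s^2) ^ 2 = 1 - s^2 :=
  Real.sq_sqrt (by linarith)

lemma gD_ge_one {s : ℝ} (h0 : 0 ≤ s) (h1 : s ≤ 1) : 1 ≤ gD s := by
  have ha := self_le_arcsin h0 h1
  have hc := sqrt_one_sub_sq_nonneg s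
  have h2 : s^2 ≤ (arcsin s)^2 := by nlinarith
  have h3 : 0 ≤ 2 * arcsin s * s * Real.sqrt (1 - s^2) :=
    mul_nonneg (mul_nonneg (mul_nonneg (by norm_num) (Real.arcsin_nonneg.2 h0)) h0) hc
  unfold gD; nlinarith

lemma gD_pos {s : ℝ} (h0 : 0 ≤ s) (h1 : s ≤ 1) : 0 < gD s := lt_of_lt_of_le one_pos (gD_ge_one h0 h1)

lemma gD_sub_gN_sq {s : ℝ} (h1 : s^2 ≤ 1) : gD s - (gN s)^2 = (1 - s^2)^2 := by
  have hc := sq_sqrt_one_sub h1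
  unfold gD gN; nlinarith [hc]

lemma gN_pos {s : ℝ} (h0 : 0 < s) : 0 < gN s := by
  have := Real.arcsin_pos.2 h0
  have hc := sqrt_one_sub_sq_nonneg s
  unfold gN; nlinarith

lemma g_pos {s : ℝ} (h0 : 0 < s) (h1 : s ≤ 1) : 0 < g s := by
  have := gN_pos h0
  have := gD_pos h0.le h1
  exact div_pos ‹0 < gN s› (Real.sqrt_pos.2 ‹0 < gD s›)

lemma g_lt_one {s : ℝ} (h0 : 0 < s) (h1 : s < 1) : g s < 1 := by
  have hs1 : s^2 ≤ 1 := by nlinarith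
  have hid := gD_sub_gN_sq hs1
  have hNpos := gN_pos h0
  have hDpos := gD_pos h0.le h1.le
  have hs0 : 0 < 1 - s^2 := by nlinarith
  have hsq : 0 < (1 - s^2)^2 := by positivity
  have hN2 : (gN s)^2 < gD s := by nlinarith
  have : gN s < Real.sqrt (gD s) := by
    have := Real.lt_sqrt hNpos.le (y := gD s)
    rw [Real.lt_sqrt hNpos.le]; exact hN2
  rw [g, div_lt_one (Real.sqrt_pos.2 hDpos)]; exact this

lemma g_sq {s : ℝ} (h0 : 0 < s) (h1 : s ≤ 1) : (g s)^2 = (gN s)^2 / gD s := by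
  rw [g, div_pow, Real.sq_sqrt (gD_pos h0.le h1).le]

lemma one_sub_g_sq {s : ℝ} (h0 : 0 < s) (h1 : s < 1) : 1 - (g s)^2 ≤ (1 - s^2)^2 := by
  have hs1 : s^2 ≤ 1 := by nlinarith
  have hid := gD_sub_gN_sq hs1
  have hD1 := gD_ge_one h0.le h1.le
  have hDpos : (0:ℝ) < gD s := by linarith
  rw [g_sq h0 h1.le]
  have heq : 1 - (gN s)^2 / gD s = (1 - s^2)^2 / gD s := by
    field_simp
    linarith
  rw [heq]
  exact div_le_self (sq_nonneg _) hD1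

lemma self_le_g {s : ℝ} (h0 : 0 < s) (h1 : s < 1) : s ≤ g s := by
  have hs1 : s^2 ≤ 1 := by nlinarith
  have hc := sq_sqrt_one_sub hs1
  have hcn := sqrt_one_sub_sq_nonneg s
  have ha := self_le_arcsin h0.le h1.le
  have hDpos := gD_pos h0.le h1.le
  have hφ : 0 ≤ arcsin s := Real.arcsin_nonneg.2 h0.le
  have h1s2 : 0 ≤ 1 - s^2 := by nlinarith
  have hkey : s^2 * gD s ≤ (gN s)^2 := by
    unfold gD gN
    nlinarith [mul_nonneg (sq_nonneg (arcsin s)) h1s2,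
      mul_nonneg (mul_nonneg (mul_nonneg hφ h0.le) hcn) h1s2]
  have : s * Real.sqrt (gD s) ≤ gN s := by
    have h2 : (s * Real.sqrt (gD s))^2 ≤ (gN s)^2 := by
      rw [mul_pow, Real.sq_sqrt hDpos.le]; exact hkey
    have hnn : 0 ≤ s * Real.sqrt (gD s) := mul_nonneg h0.le (Real.sqrt_nonneg _)
    nlinarith [gN_pos h0]
  rw [g, le_div_iff₀ (Real.sqrt_pos.2 hDpos)]; linarith

end EMPop


namespace EMPop2

lemma pow_bound {a b : ℝ} (n : ℕ) (hn : n ≠ 0) (ha : 0 < a) (hb : 0 < b) (h : a ^ n ≤ b ^ n) :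
    a ≤ b := by
  by_contra h'
  push_neg at h'
  exact absurd h (not_le.2 (pow_lt_pow_left₀ h' hb.le hn))

-- growth lemma
lemma g_growth' {s : ℝ} (h0 : 0 < s) (h2 : s ≤ 1/2) :
    (5/4) * s * Real.sqrt ((arcsin s)^2 + (1 - s^2) + 2 * arcsin s * s * Real.sqrt (1 - s^2))
      ≤ arcsin s + s * Real.sqrt (1 - s^2) := by
  set c := Real.sqrt (1 - s^2) with hc
  have h1 : s < 1 := by linarith
  have hs2 : s^2 ≤ 1 := by nlinarith
  have hc2 : c^2 = 1 - s^2 := Real.sq_sqrt (by nlinarith)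
  have hcn : 0 ≤ c := Real.sqrt_nonneg _
  have hc1 : c ≤ 1 := by nlinarith
  have hclo : (0.86 : ℝ) ≤ c := by nlinarith
  have ha := Real.arcsin_nonneg.2 h0.le
  have haself : s ≤ arcsin s := by
    have h := Real.sin_le ha
    rwa [Real.sin_arcsin (by linarith) h1.le] at h
  have hamono : arcsin s ≤ arcsin (1/2) := Real.monotone_arcsin h2
  have hpi6 : arcsin (1/2 : ℝ) = π/6 := by
    rw [show (1/2 : ℝ) = Real.sin (π/6) by rw [Real.sin_pi_div_six]]
    exact Real.arcsin_sin (by nlinarith [Real.pi_pos]) (by nlinarith [Real.pi_pos])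
  have haup : arcsin s ≤ 0.5236 := by
    rw [hpi6] at hamono
    nlinarith [Real.pi_lt_d6]
  have t1 : arcsin s * s ≤ 0.5236 * (1/2) := mul_le_mul haup h2 h0.le (by norm_num)
  have t2 : arcsin s * s * c ≤ 0.5236 * (1/2) * 1 :=
    mul_le_mul t1 hc1 hcn (by norm_num)
  have t3 : (arcsin s)^2 ≤ 0.5236^2 := by nlinarith
  have hDle : (arcsin s)^2 + (1 - s^2) + 2 * arcsin s * s * c ≤ 1.8 := by nlinarith
  have hDnn : 0 ≤ (arcsin s)^2 + (1 - s^2) + 2 * arcsin s * s * c := by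
    nlinarith [mul_nonneg (mul_nonneg ha h0.le) hcn, sq_nonneg (arcsin s)]
  have hsqle : Real.sqrt ((arcsin s)^2 + (1 - s^2) + 2 * arcsin s * s * c) ≤ 1.35 := by
    rw [show (1.35:ℝ) = Real.sqrt (1.35^2) by rw [Real.sqrt_sq]; norm_num]
    exact Real.sqrt_le_sqrt (by nlinarith)
  have hsqnn : 0 ≤ Real.sqrt ((arcsin s)^2 + (1 - s^2) + 2 * arcsin s * s * c) := Real.sqrt_nonneg _
  nlinarith [mul_le_mul_of_nonneg_left hsqle (by linarith : (0:ℝ) ≤ (5/4) * s)]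

-- Jordan-based error bound
lemma jordan_err1 {s : ℝ} (h0 : 0 ≤ s) (h1 : s ≤ 1) :
    (1 - 2/π * arcsin s)^2 ≤ 1 - s^2 := by
  have hπ := Real.pi_gt_three
  have hx0 : 0 ≤ Real.arccos s := Real.arccos_nonneg s
  have hx1 : Real.arccos s ≤ π/2 := Real.arccos_le_pi_div_two.2 h0
  have hj := Real.mul_le_sin hx0 hx1
  rw [Real.sin_arccos] at hj
  have heq : 1 - 2/π * arcsin s = 2/π * Real.arccos s := by
    rw [Real.arccos_eq_pi_div_two_sub_arcsin]
    field_simp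
  have hs2 : Real.sqrt (1 - s^2) ^ 2 = 1 - s^2 := Real.sq_sqrt (by nlinarith)
  rw [heq]
  have hnn : 0 ≤ 2/π * Real.arccos s := by positivity
  nlinarith [Real.sqrt_nonneg (1 - s^2)]

lemma jordan_err {s : ℝ} (h0 : 0 ≤ s) (h1 : s ≤ 1) :
    (1 - 2/π * arcsin s)^2 + (2/π)^2 * (1 - s^2) ≤ 2 * (1 - s^2) := by
  have hπ := Real.pi_gt_three
  have h2 := jordan_err1 h0 h1
  have h3 : (2/π)^2 ≤ 1 := by
    rw [div_pow, div_le_one (by positivity)]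
    nlinarith
  nlinarith [sq_nonneg s]

-- numeric log lemmas
lemma log_four_thirds : (1/4 : ℝ) ≤ Real.log (4/3) := by
  have h4 : Real.exp ((1:ℝ)/4) ^ (4:ℕ) = Real.exp 1 := by
    rw [← Real.exp_nat_mul]; norm_num
  have he := Real.exp_one_lt_d9
  have hle : Real.exp ((1:ℝ)/4) ≤ 4/3 := by
    refine pow_bound 4 (by norm_num) (Real.exp_pos _) (by norm_num) ?_
    rw [h4]; nlinarith
  calc (1/4 : ℝ) = Real.log (Real.exp (1/4)) := by rw [Real.log_exp]
    _ ≤ Real.log (4/3) := Real.log_le_log (Real.exp_pos _) hle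

lemma log_five_fourths : (1/5 : ℝ) ≤ Real.log (5/4) := by
  have h4 : Real.exp ((1:ℝ)/5) ^ (5:ℕ) = Real.exp 1 := by
    rw [← Real.exp_nat_mul]; norm_num
  have he := Real.exp_one_lt_d9
  have hle : Real.exp ((1:ℝ)/5) ≤ 5/4 := by
    refine pow_bound 5 (by norm_num) (Real.exp_pos _) (by norm_num) ?_
    rw [h4]; nlinarith
  calc (1/5 : ℝ) = Real.log (Real.exp (1/5)) := by rw [Real.log_exp]
    _ ≤ Real.log (5/4) := Real.log_le_log (Real.exp_pos _) hle

lemma loglog_ge : (-1/2 : ℝ) ≤ Real.log (Real.log 2) := by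
  have h2 : Real.exp ((1:ℝ)/2) ^ (2:ℕ) = Real.exp 1 := by
    rw [← Real.exp_nat_mul]; norm_num
  have he := Real.exp_one_gt_d9
  have hgt : (1.4428 : ℝ) ≤ Real.exp ((1:ℝ)/2) := by
    refine (pow_bound 2 (by norm_num) (by norm_num) (Real.exp_pos _) ?_)
    rw [h2]; nlinarith
  have hexp : Real.exp (-1/2 : ℝ) ≤ Real.log 2 := by
    have he2 : Real.exp (-1/2 : ℝ) = (Real.exp ((1:ℝ)/2))⁻¹ := by
      rw [← Real.exp_neg]; norm_num
    have h1 : (Real.exp ((1:ℝ)/2))⁻¹ ≤ (1.4428 : ℝ)⁻¹ :=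
      inv_anti₀ (by norm_num) hgt
    have h3 : (1.4428:ℝ)⁻¹ ≤ 0.6931471803 := by norm_num
    have := Real.log_two_gt_d9
    rw [he2]; linarith
  calc (-1/2 : ℝ) = Real.log (Real.exp (-1/2)) := by rw [Real.log_exp]
    _ ≤ Real.log (Real.log 2) := Real.log_le_log (Real.exp_pos _) hexp

-- inner/norm computation lemma
lemma comb {d : ℕ} (x y : EuclideanSpace ℝ (Fin d)) (hx : x ≠ 0) (hy : y ≠ 0) (A B : ℝ) :
    ⟪A • (‖y‖⁻¹ • y) + B • (‖x‖⁻¹ • x), y⟫ = (A + B * (⟪x, y⟫ / (‖x‖ * ‖y‖))) * ‖y‖ ∧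
    ‖A • (‖y‖⁻¹ • y) + B • (‖x‖⁻¹ • x)‖^2 = A^2 + B^2 + 2*A*B*(⟪x, y⟫ / (‖x‖ * ‖y‖)) := by
  have hxn : (0:ℝ) < ‖x‖ := norm_pos_iff.2 hx
  have hyn : (0:ℝ) < ‖y‖ := norm_pos_iff.2 hy
  have hyx : ⟪y, x⟫ = ⟪x, y⟫ := real_inner_comm x y
  constructor
  · rw [inner_add_left, real_inner_smul_left, real_inner_smul_left, real_inner_smul_left,
      real_inner_smul_left, real_inner_self_eq_norm_sq]
    field_simp
  · rw [← real_inner_self_eq_norm_sq]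
    simp only [inner_add_left, inner_add_right, real_inner_smul_left, real_inner_smul_right]
    rw [real_inner_self_eq_norm_sq x, real_inner_self_eq_norm_sq y, hyx]
    field_simp
    ring

end EMPop2

lemma g_growth_main {s : ℝ} (h0 : 0 < s) (h2 : s ≤ 1/2) : (5/4)*s ≤ EMPop.g s := by
  have h := EMPop2.g_growth' h0 h2
  have hD := EMPop.gD_pos h0.le (by linarith)
  rw [EMPop.g, le_div_iff₀ (Real.sqrt_pos.2 hD)]
  unfold EMPop.gD EMPop.gN
  exact h


section AuxLemmas
open Real

lemma aux_sq_le_one {a : ℝ} (h0 : 0 ≤ a) (h1 : a < 1) : a^2 ≤ 1 := by nlinarith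

lemma aux_one_sub_sq {a : ℝ} (h : 1/2 ≤ a) : 1 - a^2 ≤ 3/4 := by nlinarith

lemma aux_one_sub_sq_nonneg {a : ℝ} (h0 : 0 ≤ a) (h1 : a ≤ 1) : 0 ≤ 1 - a^2 := by nlinarith

lemma aux_h2k {lg LL kk : ℝ} (h1 : 0.6931471803 < lg) (hLL : -1/2 ≤ LL)
    (hk : 8 + 2*LL ≤ kk) : 4*lg + LL ≤ kk*lg := by
  nlinarith [mul_le_mul_of_nonneg_right hk (by linarith : (0:ℝ) ≤ lg),
    mul_nonneg (show (0:ℝ) ≤ LL + 1/2 by linarith) (show (0:ℝ) ≤ 2*lg - 1 by linarith)]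

lemma aux_cross_le {w X Y : ℝ} (hX : X ≤ 0) (hY : 0 ≤ Y) : 2*w^2*X*Y ≤ 0 := by
  nlinarith [sq_nonneg w, mul_nonpos_of_nonpos_of_nonneg hX hY]

lemma aux_distrib {w a b c : ℝ} (h : a + b ≤ c) : w^2*a + w^2*b ≤ w^2*c := by
  nlinarith [sq_nonneg w, mul_le_mul_of_nonneg_left h (sq_nonneg w)]

lemma aux_lt_sq {E w x e : ℝ} (hb : E ≤ w^2*(2*x)) (hx : x ≤ e^2/4) (he : 0 < e)
    (hw : 0 < w) : E < (e*w)^2 := by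
  nlinarith [mul_le_mul_of_nonneg_left hx (sq_nonneg w), mul_pos (mul_pos he he) (mul_pos hw hw)]

lemma aux_sqrt_lt {a b : ℝ} (ha : 0 ≤ a) (hb : 0 < b) (h : a^2 < b^2) : a < b := by
  nlinarith

lemma aux_eps {e : ℝ} (h0 : 0 < e) (h1 : e ≤ 1) : e/2 ≤ 100*Real.sqrt e := by
  have hm : Real.sqrt e * Real.sqrt e = e := Real.mul_self_sqrt h0.le
  have h2 : Real.sqrt e ≤ 1 := by
    rw [show (1:ℝ) = Real.sqrt 1 by rw [Real.sqrt_one]]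
    exact Real.sqrt_le_sqrt h1
  nlinarith [Real.sqrt_nonneg e]

end AuxLemmas


set_option maxHeartbeats 2000000

/-- (Population-level convergence.)  There is an absolute constant
`C > 0` such that for any noiseless population EM iterates
`θ^{t+1} = (2‖θ*‖/π)(sgn(ρ^t) φ^t θ*/‖θ*‖ + cos(φ^t) θ^t/‖θ^t‖)`,
`tanh(ν^{t+1}) = sgn(ρ⁰)(2/π) φ^t tanh(ν*)`, started from `θ⁰` with
`0 < |ρ⁰| < 1`, and any `ε ∈ (0, 1/2)`: once
`T ≥ C (log(1/|ρ⁰|) + log log (1/ε) + 1)`, one has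
`‖θ^{T+1} - sgn(ρ⁰) θ*‖/‖θ*‖ < ε` and
`|tanh(ν^{T+1}) - sgn(ρ⁰) tanh ν*| ≤ C √ε |tanh ν*|`. -/
theorem em_population_convergence :
    ∃ C : ℝ, 0 < C ∧
      ∀ (d : ℕ) (θ : ℕ → EuclideanSpace ℝ (Fin d)) (θs : EuclideanSpace ℝ (Fin d))
        (ν : ℕ → ℝ) (νs : ℝ) (ρ φ : ℕ → ℝ),
        θ 0 ≠ 0 → θs ≠ 0 →
        (∀ t : ℕ, ρ t = ⟪θ t, θs⟫ / (‖θ t‖ * ‖θs‖)) →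
        (∀ t : ℕ, φ t = π / 2 - Real.arccos |ρ t|) →
        0 < |ρ 0| → |ρ 0| < 1 →
        (∀ t : ℕ, θ (t + 1) = (2 * ‖θs‖ / π) •
            ((Real.sign (ρ t) * φ t) • (‖θs‖⁻¹ • θs) +
              Real.cos (φ t) • (‖θ t‖⁻¹ • θ t))) →
        (∀ t : ℕ, Real.tanh (ν (t + 1)) =
            Real.sign (ρ 0) * (2 / π) * φ t * Real.tanh νs) →
        ∀ ε : ℝ, ε ∈ Set.Ioo 0 (1 / 2) →
          ∀ T : ℕ, (T : ℝ) ≥ C * (Real.log (1 / |ρ 0|) + Real.log (Real.log (1 / ε)) + 1) →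
            ‖θ (T + 1) - Real.sign (ρ 0) • θs‖ / ‖θs‖ < ε ∧
            |Real.tanh (ν (T + 1)) - Real.sign (ρ 0) * Real.tanh νs|
              ≤ C * Real.sqrt ε * |Real.tanh νs| := by
  refine ⟨100, by norm_num, ?_⟩
  intro d θ θs ν νs ρ φ hθ0 hθs hρ hφ hρ0pos hρ0lt hθrec hνrec ε hε T hT
  obtain ⟨hε0, hε12⟩ := hε
  have hπ := Real.pi_pos
  have hw : (0:ℝ) < ‖θs‖ := norm_pos_iff.2 hθs
  set σ := Real.sign (ρ 0) with hσdef
  have hρ0ne : ρ 0 ≠ 0 := abs_pos.1 hρ0pos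
  have hσcases : σ = -1 ∨ σ = 1 := Real.sign_apply_eq_of_ne_zero (ρ 0) hρ0ne
  have habsσ : |σ| = 1 := by rcases hσcases with h | h <;> rw [h] <;> norm_num
  have hσ2 : σ^2 = 1 := by rcases hσcases with h | h <;> rw [h] <;> norm_num
  have hφ' : ∀ t, φ t = arcsin |ρ t| := by
    intro t
    rw [hφ t, Real.arccos_eq_pi_div_two_sub_arcsin]
    ring
  -- the one-step computation
  have step : ∀ t, θ t ≠ 0 → 0 < |ρ t| → |ρ t| < 1 → ρ t = σ * |ρ t| →
      θ (t+1) ≠ 0 ∧ ρ (t+1) = σ * EMPop.g |ρ t| := by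
    intro t hne h0 h1 hsg
    have hsignt : Real.sign (ρ t) = σ := by
      rcases hσcases with h | h
      · have hneg : ρ t < 0 := by rw [hsg, h]; linarith
        rw [Real.sign_of_neg hneg, h]
      · have hpos : 0 < ρ t := by rw [hsg, h]; linarith
        rw [Real.sign_of_pos hpos, h]
    have hcos : Real.cos (φ t) = Real.sqrt (1 - |ρ t|^2) := by
      rw [hφ' t, Real.cos_arcsin]
    obtain ⟨hc1, hc2⟩ := EMPop2.comb (θ t) θs hne hθs (σ * arcsin |ρ t|)
      (Real.sqrt (1 - |ρ t|^2))
    rw [← hρ t] at hc1 hc2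
    have hθ1 : θ (t+1) = (2*‖θs‖/π) • ((σ * arcsin |ρ t|) • (‖θs‖⁻¹ • θs) +
        (Real.sqrt (1 - |ρ t|^2)) • (‖θ t‖⁻¹ • θ t)) := by
      rw [hθrec t, hsignt, hcos, hφ' t]
    have hr : (0:ℝ) < 2*‖θs‖/π := by positivity
    have hsq1 : |ρ t|^2 ≤ 1 := aux_sq_le_one (abs_nonneg _) h1
    have hB2 : Real.sqrt (1 - |ρ t|^2)^2 = 1 - |ρ t|^2 := Real.sq_sqrt (by linarith)
    have hNval : σ * arcsin |ρ t| + Real.sqrt (1 - |ρ t|^2) * ρ t = σ * EMPop.gN |ρ t| := by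
      unfold EMPop.gN
      linear_combination (Real.sqrt (1 - |ρ t|^2)) * hsg
    have hDval : (σ * arcsin |ρ t|)^2 + (Real.sqrt (1 - |ρ t|^2))^2 +
        2*(σ * arcsin |ρ t|)*(Real.sqrt (1 - |ρ t|^2))*(ρ t) = EMPop.gD |ρ t| := by
      unfold EMPop.gD
      linear_combination (2*σ*(Real.arcsin |ρ t|)*(Real.sqrt (1 - |ρ t|^2))) * hsg +
        ((Real.arcsin |ρ t|)^2 + 2*(Real.arcsin |ρ t|)*(|ρ t|)*(Real.sqrt (1 - |ρ t|^2))) * hσ2 + hB2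
    have hinner : ⟪θ (t+1), θs⟫ =
        (2*‖θs‖/π) * ((σ * arcsin |ρ t| + Real.sqrt (1 - |ρ t|^2) * ρ t) * ‖θs‖) := by
      rw [hθ1, real_inner_smul_left, hc1]
    have hnormsq : ‖θ (t+1)‖^2 = (2*‖θs‖/π)^2 * EMPop.gD |ρ t| := by
      rw [hθ1, norm_smul, Real.norm_eq_abs, abs_of_pos hr, mul_pow, hc2, hDval]
    have hgDpos := EMPop.gD_pos (abs_nonneg (ρ t)) h1.le
    have hnorm : ‖θ (t+1)‖ = (2*‖θs‖/π) * Real.sqrt (EMPop.gD |ρ t|) := by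
      calc ‖θ (t+1)‖ = Real.sqrt (‖θ (t+1)‖^2) := (Real.sqrt_sq (norm_nonneg _)).symm
        _ = Real.sqrt ((2*‖θs‖/π)^2 * EMPop.gD |ρ t|) := by rw [hnormsq]
        _ = (2*‖θs‖/π) * Real.sqrt (EMPop.gD |ρ t|) := by
            rw [Real.sqrt_mul (sq_nonneg _), Real.sqrt_sq hr.le]
    have hne' : θ (t+1) ≠ 0 := by
      rw [← norm_ne_zero_iff, hnorm]
      exact (mul_pos hr (Real.sqrt_pos.2 hgDpos)).ne'
    refine ⟨hne', ?_⟩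
    rw [hρ (t+1), hinner, hnorm, hNval, EMPop.g]
    field_simp [(Real.sqrt_pos.2 hgDpos).ne']
  -- the invariant
  have inv : ∀ t, θ t ≠ 0 ∧ 0 < |ρ t| ∧ |ρ t| < 1 ∧ ρ t = σ * |ρ t| := by
    intro t
    induction t with
    | zero =>
      refine ⟨hθ0, hρ0pos, hρ0lt, ?_⟩
      rcases lt_or_gt_of_ne hρ0ne with h | h
      · rw [hσdef, Real.sign_of_neg h, abs_of_neg h]; ring
      · rw [hσdef, Real.sign_of_pos h, abs_of_pos h]; ring
    | succ n ih =>
      obtain ⟨hne, h0, h1, hsg⟩ := ih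
      obtain ⟨hne', hρ1⟩ := step n hne h0 h1 hsg
      have hg0 := EMPop.g_pos h0 h1.le
      have hg1 := EMPop.g_lt_one h0 h1
      have habs : |ρ (n+1)| = EMPop.g |ρ n| := by
        rw [hρ1, abs_mul, habsσ, one_mul, abs_of_pos hg0]
      exact ⟨hne', by rw [habs]; exact hg0, by rw [habs]; exact hg1, by rw [habs, hρ1]⟩
  have hrec : ∀ t, |ρ (t+1)| = EMPop.g |ρ t| := by
    intro t
    obtain ⟨hne, h0, h1, hsg⟩ := inv t
    obtain ⟨_, hρ1⟩ := step t hne h0 h1 hsg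
    rw [hρ1, abs_mul, habsσ, one_mul, abs_of_pos (EMPop.g_pos h0 h1.le)]
  -- abbreviations for the counting
  set L0 := Real.log (1/|ρ 0|) with hL0def
  set L := Real.log (1/ε) with hLdef
  set LL := Real.log L with hLLdef
  have hL0nn : 0 ≤ L0 := Real.log_nonneg (by rw [le_div_iff₀ hρ0pos]; linarith)
  have hLlog2 : Real.log 2 ≤ L := Real.log_le_log two_pos (by rw [le_div_iff₀ hε0]; linarith)
  have hLpos : 0 < L := lt_of_lt_of_le (Real.log_pos one_lt_two) hLlog2
  have hLL : -1/2 ≤ LL :=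
    le_trans EMPop2.loglog_ge (Real.log_le_log (Real.log_pos one_lt_two) hLlog2)
  set m := ⌈5*L0⌉₊ + 5 with hmdef
  have hm5 : 5*L0 ≤ (m:ℝ) := by
    rw [hmdef]; push_cast; linarith [Nat.le_ceil (5*L0)]
  have hmup : (m:ℝ) ≤ 5*L0 + 6 := by
    rw [hmdef]; push_cast
    linarith [Nat.ceil_lt_add_one (by positivity : (0:ℝ) ≤ 5*L0)]
  have hTm : m ≤ T := by
    have h : (m:ℝ) ≤ (T:ℝ) := by linarith
    exact_mod_cast h
  set k := T - m with hkdef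
  have hTmk : T = m + k := by omega
  have hk8 : 8 + 2*LL ≤ (k:ℝ) := by
    have hk' : (k:ℝ) = (T:ℝ) - (m:ℝ) := by
      rw [hTmk]; push_cast; ring
    rw [hk']; linarith
  -- phase 1
  have grow : ∀ t, min (1/2) ((5/4:ℝ)^t * |ρ 0|) ≤ |ρ t| := by
    intro t
    induction t with
    | zero =>
      have := min_le_right (1/2:ℝ) ((5/4:ℝ)^(0:ℕ) * |ρ 0|)
      simpa using this
    | succ t ih =>
      obtain ⟨_, h0, h1, _⟩ := inv t
      have hg := hrec t
      by_cases hc : (1/2:ℝ) ≤ |ρ t|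
      · have hmono : |ρ t| ≤ |ρ (t+1)| := by
          rw [hg]; exact EMPop.self_le_g h0 h1
        exact le_trans (min_le_left _ _) (by linarith)
      · push_neg at hc
        have hlow : (5/4:ℝ)^t * |ρ 0| ≤ |ρ t| := by
          rcases le_or_gt (1/2:ℝ) ((5/4:ℝ)^t * |ρ 0|) with h | h
          · exfalso; rw [min_eq_left h] at ih; linarith
          · rwa [min_eq_right h.le] at ih
        have hgr : (5/4)*|ρ t| ≤ |ρ (t+1)| := by
          rw [hg]; exact g_growth_main h0 hc.le
        refine le_trans (min_le_right _ _) ?_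
        rw [pow_succ]
        linarith
  have hpowm : 1 ≤ (5/4:ℝ)^m * |ρ 0| := by
    have h1 : Real.log (1/|ρ 0|) ≤ Real.log ((5/4:ℝ)^m) := by
      rw [Real.log_pow]
      have h2 : (m:ℝ)*(1/5) ≤ (m:ℝ)*Real.log (5/4) :=
        mul_le_mul_of_nonneg_left EMPop2.log_five_fourths (Nat.cast_nonneg m)
      rw [← hL0def]
      linarith
    have h3 : 1/|ρ 0| ≤ (5/4:ℝ)^m :=
      (Real.log_le_log_iff (by positivity) (by positivity)).1 h1
    calc (1:ℝ) = (1/|ρ 0|) * |ρ 0| := by field_simp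
      _ ≤ (5/4:ℝ)^m * |ρ 0| := mul_le_mul_of_nonneg_right h3 (abs_nonneg _)
  have hsm : (1/2:ℝ) ≤ |ρ m| := by
    have h := grow m
    rwa [min_eq_left (by linarith)] at h
  -- phase 2
  have decay : ∀ j, 1 - |ρ (m+j)|^2 ≤ (3/4:ℝ)^(2^j) := by
    intro j
    induction j with
    | zero =>
      have h : 1 - |ρ m|^2 ≤ (3/4:ℝ) := aux_one_sub_sq hsm
      simpa using h
    | succ j ih =>
      obtain ⟨_, h0, h1, _⟩ := inv (m+j)
      have hg := hrec (m+j)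
      have h2 : 1 - |ρ (m+(j+1))|^2 ≤ (1 - |ρ (m+j)|^2)^2 := by
        have : m + (j+1) = (m+j) + 1 := rfl
        rw [this, hg]
        exact EMPop.one_sub_g_sq h0 h1
      have hnn : 0 ≤ 1 - |ρ (m+j)|^2 := aux_one_sub_sq_nonneg (abs_nonneg _) h1.le
      calc 1 - |ρ (m+(j+1))|^2 ≤ (1 - |ρ (m+j)|^2)^2 := h2
        _ ≤ ((3/4:ℝ)^(2^j))^2 := pow_le_pow_left₀ hnn ih 2
        _ = (3/4:ℝ)^(2^(j+1)) := by rw [← pow_mul, pow_succ]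
  have hxT0 : 1 - |ρ T|^2 ≤ (3/4:ℝ)^(2^k) := by rw [hTmk]; exact decay k
  have hfinal : (3/4:ℝ)^(2^k) ≤ ε^2/4 := by
    have hlog2 := Real.log_two_gt_d9
    have hlog2' := Real.log_two_lt_d9
    have h2k : Real.log 16 + LL ≤ (k:ℝ)*Real.log 2 := by
      have h16 : Real.log (16:ℝ) = 4*Real.log 2 := by
        rw [show (16:ℝ) = 2^(4:ℕ) by norm_num, Real.log_pow]; push_cast; ring
      rw [h16]
      exact aux_h2k hlog2 hLL hk8
    have hn : 16*L ≤ ((2:ℝ)^k) := by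
      have hlog : Real.log (16*L) ≤ Real.log ((2:ℝ)^k) := by
        rw [Real.log_mul (by norm_num) hLpos.ne', Real.log_pow]
        exact h2k
      exact (Real.log_le_log_iff (by positivity) (by positivity)).1 hlog
    have hppos : (0:ℝ) < (3/4:ℝ)^(2^k) := by positivity
    have hεpos : (0:ℝ) < ε^2/4 := by positivity
    rw [← Real.log_le_log_iff hppos hεpos]
    have hlog34 : Real.log ((3/4:ℝ)^(2^k)) = -(((2^k:ℕ)):ℝ)*Real.log (4/3) := by
      rw [Real.log_pow, show (3/4:ℝ) = (4/3)⁻¹ by norm_num, Real.log_inv]; ring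
    have hcast : (((2^k:ℕ)):ℝ) = (2:ℝ)^k := by push_cast; ring
    have hlogε : Real.log (ε^2/4) = -2*L - 2*Real.log 2 := by
      rw [Real.log_div (by positivity) (by norm_num), Real.log_pow, hLdef, one_div,
        Real.log_inv, show (4:ℝ) = 2^(2:ℕ) by norm_num, Real.log_pow]
      push_cast; ring
    rw [hlog34, hcast, hlogε]
    have h43 := EMPop2.log_four_thirds
    have hnpos : (0:ℝ) ≤ (2:ℝ)^k := by positivity
    have hmm : 16*L*(1/4) ≤ (2:ℝ)^k * Real.log (4/3) :=
      mul_le_mul hn h43 (by norm_num) hnpos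
    linarith
  have hx : 1 - |ρ T|^2 ≤ ε^2/4 := le_trans hxT0 hfinal
  -- final error bounds
  obtain ⟨hTne, hT0, hT1, hTsg⟩ := inv T
  have hsignT : Real.sign (ρ T) = σ := by
    rcases hσcases with h | h
    · have hneg : ρ T < 0 := by rw [hTsg, h]; linarith
      rw [Real.sign_of_neg hneg, h]
    · have hpos : 0 < ρ T := by rw [hTsg, h]; linarith
      rw [Real.sign_of_pos hpos, h]
  set sv := |ρ T| with hsvdef
  have hsv0 : 0 ≤ sv := hsvdef ▸ abs_nonneg (ρ T)
  have hφT : φ T = arcsin sv := hφ' T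
  have hcv2 : Real.sqrt (1 - sv^2)^2 = 1 - sv^2 :=
    Real.sq_sqrt (aux_one_sub_sq_nonneg hsv0 hT1.le)
  have hcvnn : 0 ≤ Real.sqrt (1 - sv^2) := Real.sqrt_nonneg _
  have harc1 : (2/π)*arcsin sv ≤ 1 := by
    have := Real.arcsin_le_pi_div_two sv
    rw [div_mul_eq_mul_div, div_le_one hπ]
    linarith
  have harcnn : 0 ≤ arcsin sv := Real.arcsin_nonneg.2 hsv0
  -- the error vector identity
  have hvec : θ (T+1) - σ • θs =
      ((2*‖θs‖/π)*(σ*arcsin sv) - σ*‖θs‖) • (‖θs‖⁻¹ • θs) +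
        ((2*‖θs‖/π)*Real.sqrt (1 - sv^2)) • (‖θ T‖⁻¹ • θ T) := by
    rw [hθrec T, hsignT, hφT, Real.cos_arcsin]
    match_scalars
    · field_simp
    · field_simp
  obtain ⟨_, hnc⟩ := EMPop2.comb (θ T) θs hTne hθs
    ((2*‖θs‖/π)*(σ*arcsin sv) - σ*‖θs‖) ((2*‖θs‖/π)*Real.sqrt (1 - sv^2))
  rw [← hρ T] at hnc
  have herr2 : ‖θ (T+1) - σ • θs‖^2 =
      ((2*‖θs‖/π)*(σ*arcsin sv) - σ*‖θs‖)^2 + ((2*‖θs‖/π)*Real.sqrt (1 - sv^2))^2 +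
        2*((2*‖θs‖/π)*(σ*arcsin sv) - σ*‖θs‖)*((2*‖θs‖/π)*Real.sqrt (1 - sv^2))*(ρ T) := by
    rw [hvec]; exact hnc
  have hj := EMPop2.jordan_err hsv0 hT1.le
  have hA2 : ((2*‖θs‖/π)*(σ*arcsin sv) - σ*‖θs‖)^2 =
      ‖θs‖^2*(1 - 2/π*arcsin sv)^2 := by
    linear_combination (((2*‖θs‖/π)*arcsin sv - ‖θs‖)^2) * hσ2
  have hB2' : ((2*‖θs‖/π)*Real.sqrt (1 - sv^2))^2 = ‖θs‖^2*((2/π)^2*(1 - sv^2)) := by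
    linear_combination ((2*‖θs‖/π)^2) * hcv2
  have hcross : 2*((2*‖θs‖/π)*(σ*arcsin sv) - σ*‖θs‖)*((2*‖θs‖/π)*Real.sqrt (1 - sv^2))*(ρ T)
      = 2*‖θs‖^2*((2/π)*arcsin sv - 1)*((2/π)*Real.sqrt (1 - sv^2)*sv) := by
    linear_combination (2*((2*‖θs‖/π)*(σ*arcsin sv) - σ*‖θs‖)*((2*‖θs‖/π)*Real.sqrt (1 - sv^2))) * hTsg +
      (2*‖θs‖^2*((2/π)*arcsin sv - 1)*((2/π)*Real.sqrt (1 - sv^2)*sv)) * hσ2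
  have hcrossle : 2*‖θs‖^2*((2/π)*arcsin sv - 1)*((2/π)*Real.sqrt (1 - sv^2)*sv) ≤ 0 := by
    have hfac : 0 ≤ (2/π)*Real.sqrt (1 - sv^2)*sv := by positivity
    have hneg : (2/π)*arcsin sv - 1 ≤ 0 := by linarith
    exact aux_cross_le hneg hfac
  have hjw : ‖θs‖^2*(1 - 2/π*arcsin sv)^2 + ‖θs‖^2*((2/π)^2*(1 - sv^2)) ≤
      ‖θs‖^2*(2*(1 - sv^2)) := aux_distrib hj
  have hbound : ‖θ (T+1) - σ • θs‖^2 ≤ ‖θs‖^2*(2*(1 - sv^2)) := by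
    rw [herr2, hA2, hB2', hcross]
    linarith
  constructor
  · -- first goal
    have hlt : ‖θ (T+1) - σ • θs‖^2 < (ε*‖θs‖)^2 := aux_lt_sq hbound hx hε0 hw
    have hlt2 : ‖θ (T+1) - σ • θs‖ < ε*‖θs‖ :=
      aux_sqrt_lt (norm_nonneg _) (mul_pos hε0 hw) hlt
    rw [div_lt_iff₀ hw]
    linarith
  · -- tanh goal
    have htt : Real.tanh (ν (T+1)) - σ * Real.tanh νs =
        σ*((2/π)*arcsin sv - 1)*Real.tanh νs := by
      rw [hνrec T, hφT]; ring
    rw [htt, abs_mul, abs_mul, habsσ, one_mul,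
      abs_of_nonpos (by linarith : (2/π)*arcsin sv - 1 ≤ 0)]
    have hj1 := EMPop2.jordan_err1 hsv0 hT1.le
    have h14 : 1 - (2/π)*arcsin sv ≤ ε/2 := by
      have hann : 0 ≤ 1 - (2/π)*arcsin sv := by linarith
      calc 1 - (2/π)*arcsin sv = Real.sqrt ((1 - (2/π)*arcsin sv)^2) :=
            (Real.sqrt_sq hann).symm
        _ ≤ Real.sqrt (ε^2/4) := Real.sqrt_le_sqrt (by linarith)
        _ = ε/2 := by
            rw [show ε^2/4 = (ε/2)^2 by ring, Real.sqrt_sq (by linarith)]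
    have hεs : ε/2 ≤ 100*Real.sqrt ε := aux_eps hε0 (by linarith)
    calc -((2/π)*arcsin sv - 1) * |Real.tanh νs| ≤ (100*Real.sqrt ε) * |Real.tanh νs| := by
          apply mul_le_mul_of_nonneg_right _ (abs_nonneg _)
          linarith
      _ = 100 * Real.sqrt ε * |Real.tanh νs| := by ring
end

section
/- (Single-iteration angle perturbation.) Let d ≥ 2, let ê₁, ê₂ ∈ ℝ^d be orthonormal, let φ ∈ (0, π/2), and set ϑ := sin(φ)·ê₁ + cos(φ)·ê₂. Let ϱ ∈ ℝ^d be any vector with ‖ϱ‖ = r where 0 < r < sin φ. Define φ′ := arcsin( |⟨ϑ + ϱ, ê₁⟩| / ‖ϑ + ϱ‖ ). Then φ′ ≥ φ − arcsin(r). -/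
open Real
open scoped RealInnerProductSpace

private lemma aux_cs' (u t r x y : ℝ) (h : u ^ 2 = r ^ 2 - t ^ 2) (hxy : x ^ 2 + y ^ 2 = 1)
    (hr : 0 ≤ r) : u * y - t * x ≤ r := by
  nlinarith [sq_nonneg (u * x + t * y)]

private lemma aux_h3' (s c t u r x y : ℝ) (h1 : s * x - c * y = r)
    (h2 : u * y - t * x ≤ r) : (c + u) * y ≤ (s + t) * x := by nlinarith

private lemma aux_fin' (S W V x y : ℝ) (hS : 0 < S) (hW : 0 ≤ W) (hy : 0 ≤ y)
    (hV2 : V ^ 2 = S ^ 2 + W ^ 2) (hxy : x ^ 2 + y ^ 2 = 1) (hk : W * y ≤ S * x) :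
    y * V ≤ S := by
  nlinarith [mul_self_le_mul_self (mul_nonneg hW hy) hk, sq_nonneg (y * V)]

/-- (Single-iteration angle perturbation.)  Let `ê₁, ê₂` be
orthonormal in `ℝ^d` (`d ≥ 2`), `φ ∈ (0, π/2)`, `ϑ = sin φ ê₁ + cos φ ê₂`, and let
`ϱ` have norm `r` with `0 < r < sin φ`.  Then
`φ' = arcsin(|⟪ϑ + ϱ, ê₁⟫|/‖ϑ + ϱ‖)` satisfies `φ' ≥ φ - arcsin r`. -/
theorem single_iteration_angle_perturbation {d : ℕ} (hd : 2 ≤ d)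
    (e1 e2 : EuclideanSpace ℝ (Fin d))
    (he1 : ‖e1‖ = 1) (he2 : ‖e2‖ = 1) (horth : ⟪e1, e2⟫ = 0)
    (φ : ℝ) (hφ : φ ∈ Set.Ioo 0 (π / 2))
    (ϑ : EuclideanSpace ℝ (Fin d)) (hϑ : ϑ = Real.sin φ • e1 + Real.cos φ • e2)
    (ϱ : EuclideanSpace ℝ (Fin d)) (r : ℝ) (hr : ‖ϱ‖ = r)
    (hr0 : 0 < r) (hrφ : r < Real.sin φ)
    (φ' : ℝ) (hφ' : φ' = Real.arcsin (|⟪ϑ + ϱ, e1⟫| / ‖ϑ + ϱ‖)) :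
    φ' ≥ φ - Real.arcsin r := by
  obtain ⟨hφ0, hφ2⟩ := hφ
  set s := Real.sin φ with hs_def
  set c := Real.cos φ with hc_def
  have hs0 : 0 < s := Real.sin_pos_of_pos_of_lt_pi hφ0 (by linarith [Real.pi_pos])
  have hc0 : 0 < c := Real.cos_pos_of_mem_Ioo ⟨by linarith [Real.pi_pos], hφ2⟩
  have hr1 : r < 1 := lt_of_lt_of_le hrφ (Real.sin_le_one φ)
  have he1sq : ⟪e1, e1⟫ = (1 : ℝ) := by
    rw [real_inner_self_eq_norm_sq, he1]; norm_num
  -- the component of ϱ along e1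
  set t : ℝ := ⟪ϱ, e1⟫ with ht_def
  have ht : |t| ≤ r := by
    calc |t| ≤ ‖ϱ‖ * ‖e1‖ := abs_real_inner_le_norm ϱ e1
    _ = r := by rw [hr, he1]; ring
  -- orthogonal part of ϱ
  set ϱp : EuclideanSpace ℝ (Fin d) := ϱ - t • e1 with hϱp_def
  have hϱp_orth : ⟪ϱp, e1⟫ = (0 : ℝ) := by
    rw [hϱp_def, inner_sub_left, real_inner_smul_left, he1sq]; ring_nf
    exact sub_eq_zero.mpr ht_def.symm
  set u : ℝ := ‖ϱp‖ with hu_def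
  have hu0 : 0 ≤ u := norm_nonneg _
  have hu2 : u ^ 2 = r ^ 2 - t ^ 2 := by
    have := norm_sub_sq_real ϱ (t • e1)
    rw [norm_smul, real_inner_smul_right, he1, hr, ← ht_def] at this
    simp only [Real.norm_eq_abs] at this
    rw [hu_def, hϱp_def, this, mul_one, sq_abs]; ring
  -- the part of ϑ + ϱ orthogonal to e1
  set w : EuclideanSpace ℝ (Fin d) := c • e2 + ϱp with hw_def
  have hw_orth : ⟪w, e1⟫ = (0 : ℝ) := by
    rw [hw_def, inner_add_left, real_inner_smul_left, real_inner_comm, horth, hϱp_orth]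
    ring
  have hw_le : ‖w‖ ≤ c + u := by
    calc ‖w‖ ≤ ‖c • e2‖ + ‖ϱp‖ := norm_add_le _ _
    _ = c + u := by rw [norm_smul, he2, Real.norm_eq_abs, abs_of_pos hc0]; ring
  set v : EuclideanSpace ℝ (Fin d) := ϑ + ϱ with hv_def
  have hv_eq : v = (s + t) • e1 + w := by
    rw [hv_def, hϑ, hw_def, hϱp_def]; module
  have hst : 0 < s + t := by
    have := neg_abs_le t
    linarith [abs_nonneg t]
  have hv_inner : ⟪v, e1⟫ = s + t := by
    rw [hv_eq, inner_add_left, real_inner_smul_left, he1sq, hw_orth]; ring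
  have hv2 : ‖v‖ ^ 2 = (s + t) ^ 2 + ‖w‖ ^ 2 := by
    rw [hv_eq, norm_add_sq_real, real_inner_smul_left, real_inner_comm w e1, hw_orth, norm_smul,
      Real.norm_eq_abs, abs_of_pos hst, he1]
    ring
  have hv0 : 0 < ‖v‖ := by
    rw [norm_pos_iff]
    intro h
    rw [h] at hv_inner
    simp at hv_inner
    linarith
  clear_value s c t u ϱp w v
  -- the target angle
  set α : ℝ := Real.arcsin r with hα_def
  set θ : ℝ := φ - α with hθ_def
  clear_value α θ
  have hα0 : 0 < α := by rw [hα_def]; exact Real.arcsin_pos.mpr hr0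
  have hαφ : α ≤ φ := by
    rw [hα_def]
    calc Real.arcsin r ≤ Real.arcsin (Real.sin φ) := by
          apply Real.monotone_arcsin; rw [← hs_def]; exact hrφ.le
    _ = φ := Real.arcsin_sin (by linarith [Real.pi_pos]) hφ2.le
  have hθ0 : 0 ≤ θ := by simp [hθ_def]; linarith
  have hθ2 : θ ≤ π / 2 := by simp [hθ_def]; linarith
  have hsinθ : 0 ≤ Real.sin θ := Real.sin_nonneg_of_nonneg_of_le_pi hθ0
    (by linarith [Real.pi_pos])
  -- key trigonometric identity
  have h1 : s * Real.cos θ - c * Real.sin θ = r := by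
    have hφθ : φ - θ = α := by rw [hθ_def]; ring
    rw [hs_def, hc_def]
    calc Real.sin φ * Real.cos θ - Real.cos φ * Real.sin θ = Real.sin (φ - θ) :=
          (Real.sin_sub φ θ).symm
    _ = Real.sin α := by rw [hφθ]
    _ = r := by rw [hα_def]; exact Real.sin_arcsin (by linarith) hr1.le
  -- Cauchy–Schwarz in the plane
  have hpyth : Real.cos θ ^ 2 + Real.sin θ ^ 2 = 1 := by
    rw [add_comm]; exact Real.sin_sq_add_cos_sq θ
  have h2 : u * Real.sin θ - t * Real.cos θ ≤ r :=
    aux_cs' u t r (Real.cos θ) (Real.sin θ) hu2 hpyth hr0.le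
  -- key inequality
  have hkey : ‖w‖ * Real.sin θ ≤ (s + t) * Real.cos θ := by
    have h3 : (c + u) * Real.sin θ ≤ (s + t) * Real.cos θ :=
      aux_h3' s c t u r (Real.cos θ) (Real.sin θ) h1 h2
    calc ‖w‖ * Real.sin θ ≤ (c + u) * Real.sin θ := mul_le_mul_of_nonneg_right hw_le hsinθ
    _ ≤ (s + t) * Real.cos θ := h3
  have hwnn : (0:ℝ) ≤ ‖w‖ := norm_nonneg _
  have hfinal : Real.sin θ * ‖v‖ ≤ s + t :=
    aux_fin' (s + t) ‖w‖ ‖v‖ (Real.cos θ) (Real.sin θ) hst hwnn hsinθ hv2 hpyth hkey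
  have hdiv : Real.sin θ ≤ |⟪v, e1⟫| / ‖v‖ := by
    rw [hv_inner, abs_of_pos hst, le_div_iff₀ hv0]
    linarith
  have hmain : φ' ≥ θ := calc
    φ' = Real.arcsin (|⟪v, e1⟫| / ‖v‖) := by rw [hφ', hv_def]
    _ ≥ Real.arcsin (Real.sin θ) := Real.monotone_arcsin hdiv
    _ = θ := Real.arcsin_sin (by linarith [Real.pi_pos]) hθ2
  exact hmain
end

section
/- (Moment and sub-exponential bound.) Let λ₁, λ₂ be independent standard normal random variables, let ρ ∈ [−1, 1], and define Z := |λ₁| · |ρ·λ₁ + √(1−ρ²)·λ₂|. Then for every integer q ≥ 2: E[Z^q] ≤ 2^q · q!, and ( E[ |Z − E[Z]|^q ] )^{1/q} ≤ 2.91 · q. -/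
open MeasureTheory ProbabilityTheory Real
open Filter Finset
open scoped ENNReal NNReal

/-- Double factorial `(2k-1)!! = ∏_{i<k} (2i+1)` as a real number. -/
noncomputable def dfac (k : ℕ) : ℝ := ∏ i ∈ Finset.range k, (2 * (i : ℝ) + 1)

lemma dfac_zero : dfac 0 = 1 := by simp [dfac]

lemma dfac_succ (k : ℕ) : dfac (k + 1) = dfac k * (2 * k + 1) := by
  simp [dfac, Finset.prod_range_succ]

lemma dfac_pos (k : ℕ) : 0 < dfac k := by
  induction k with
  | zero => simp [dfac_zero]
  | succ k ih => rw [dfac_succ]; positivity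

lemma dfac_mul_eq (k : ℕ) : dfac k * (2 ^ k * (Nat.factorial k : ℝ)) = Nat.factorial (2 * k) := by
  induction k with
  | zero => simp [dfac_zero]
  | succ k ih =>
    have h2 : 2 * (k + 1) = 2 * k + 1 + 1 := by ring
    rw [dfac_succ, h2, Nat.factorial_succ, Nat.factorial_succ, Nat.factorial_succ]
    push_cast
    push_cast at ih
    linear_combination (2 * (k:ℝ) + 1) * (2 * (k:ℝ) + 2) * ih

lemma dfac_le (k : ℕ) : dfac k ≤ 2 ^ k * (Nat.factorial k : ℝ) := by
  induction k with
  | zero => simp [dfac_zero]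
  | succ k ih =>
    rw [dfac_succ, Nat.factorial_succ]
    push_cast
    have h1 : (0:ℝ) ≤ dfac k := (dfac_pos k).le
    have h2 : (2 * (k:ℝ) + 1) ≤ 2 * (k + 1) := by linarith
    calc dfac k * (2 * (k:ℝ) + 1) ≤ (2 ^ k * (Nat.factorial k : ℝ)) * (2 * ((k:ℝ) + 1)) := by
          apply mul_le_mul ih (by linarith) (by positivity) (by positivity)
      _ = 2 ^ (k+1) * ((k + 1) * (Nat.factorial k : ℝ)) := by ring

/-- Key combinatorial identity: `C(2k,2i) (2i-1)!! (2(k-i)-1)!! = C(k,i) (2k-1)!!`. -/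
lemma dfac_identity {i k : ℕ} (hik : i ≤ k) :
    (Nat.choose (2 * k) (2 * i) : ℝ) * dfac i * dfac (k - i)
      = (Nat.choose k i : ℝ) * dfac k := by
  have h1 : Nat.choose (2*k) (2*i) * Nat.factorial (2*i) * Nat.factorial (2*k - 2*i)
      = Nat.factorial (2*k) := Nat.choose_mul_factorial_mul_factorial (by omega)
  have h2 : Nat.choose k i * Nat.factorial i * Nat.factorial (k - i)
      = Nat.factorial k := Nat.choose_mul_factorial_mul_factorial hik
  have hsub : 2 * k - 2 * i = 2 * (k - i) := by omega
  rw [hsub] at h1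
  have e1 := dfac_mul_eq i
  have e2 := dfac_mul_eq (k - i)
  have e3 := dfac_mul_eq k
  have h1' : (Nat.choose (2*k) (2*i) : ℝ) * Nat.factorial (2*i) * Nat.factorial (2*(k-i))
      = Nat.factorial (2*k) := by exact_mod_cast congrArg (Nat.cast (R := ℝ)) h1
  have h2' : (Nat.choose k i : ℝ) * Nat.factorial i * Nat.factorial (k - i)
      = Nat.factorial k := by exact_mod_cast congrArg (Nat.cast (R := ℝ)) h2
  have hpow : (2:ℝ) ^ i * 2 ^ (k - i) = 2 ^ k := by
    rw [← pow_add]; congr 1; omega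
  have hfi : (0:ℝ) < Nat.factorial i := by exact_mod_cast Nat.factorial_pos i
  have hfki : (0:ℝ) < Nat.factorial (k - i) := by exact_mod_cast Nat.factorial_pos (k - i)
  have hfk : (0:ℝ) < Nat.factorial k := by exact_mod_cast Nat.factorial_pos k
  -- multiply both sides by 2^k * i! * (k-i)!
  have hmain : (Nat.choose (2 * k) (2 * i) : ℝ) * dfac i * dfac (k - i)
      * (2 ^ i * Nat.factorial i * (2 ^ (k-i) * Nat.factorial (k-i)))
      = (Nat.choose k i : ℝ) * dfac k * (2 ^ i * Nat.factorial i * (2 ^ (k-i) * Nat.factorial (k-i))) := by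
    calc (Nat.choose (2 * k) (2 * i) : ℝ) * dfac i * dfac (k - i)
        * (2 ^ i * Nat.factorial i * (2 ^ (k-i) * Nat.factorial (k-i)))
        = (Nat.choose (2*k) (2*i) : ℝ) * (dfac i * (2^i * Nat.factorial i))
          * (dfac (k-i) * (2^(k-i) * Nat.factorial (k-i))) := by ring
      _ = (Nat.choose (2*k) (2*i) : ℝ) * Nat.factorial (2*i) * Nat.factorial (2*(k-i)) := by
          rw [e1, e2]
      _ = Nat.factorial (2*k) := h1'
      _ = dfac k * (2 ^ k * Nat.factorial k) := (dfac_mul_eq k).symm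
      _ = dfac k * (2 ^ k * ((Nat.choose k i : ℝ) * Nat.factorial i * Nat.factorial (k-i))) := by
          rw [h2']
      _ = (Nat.choose k i : ℝ) * dfac k * (2 ^ i * Nat.factorial i * (2 ^ (k-i) * Nat.factorial (k-i))) := by
          rw [← hpow]; ring
  have hne : (2:ℝ) ^ i * Nat.factorial i * (2 ^ (k-i) * Nat.factorial (k-i)) ≠ 0 := by positivity
  exact mul_right_cancel₀ hne hmain

/-- Integrability of `x^n exp(-x²/2)`. -/
lemma integrable_pow_gauss (n : ℕ) :
    Integrable (fun x : ℝ => x ^ n * rexp (-x ^ 2 / 2)) := by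
  have h := integrable_rpow_mul_exp_neg_mul_sq (b := (1/2:ℝ)) (by norm_num)
    (s := (n:ℝ)) (by exact lt_of_lt_of_le (by norm_num) (Nat.cast_nonneg n))
  convert h using 2 with x
  rw [Real.rpow_natCast]
  ring_nf

/-- The Gaussian moment recursion via integration by parts. -/
lemma gauss_int_rec (n : ℕ) :
    (∫ x : ℝ, x ^ (n + 2) * rexp (-x ^ 2 / 2))
      = (n + 1 : ℝ) * ∫ x : ℝ, x ^ n * rexp (-x ^ 2 / 2) := by
  have hu : ∀ x : ℝ, HasDerivAt (fun y : ℝ => y ^ (n+1)) ((n+1 : ℝ) * x ^ n) x := by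
    intro x
    simpa using hasDerivAt_pow (n+1) x
  have hv : ∀ x : ℝ, HasDerivAt (fun y : ℝ => rexp (-y ^ 2 / 2)) (-x * rexp (-x ^ 2 / 2)) x := by
    intro x
    have h1 : HasDerivAt (fun y : ℝ => -y ^ 2 / 2) (-x) x := by
      have := ((hasDerivAt_pow 2 x).neg).div_const 2
      simpa using this.congr_deriv (by push_cast; ring)
    simpa [mul_comm] using h1.exp
  have key := integral_mul_deriv_eq_deriv_mul_of_integrable
    (u := fun y : ℝ => y ^ (n+1)) (v := fun y : ℝ => rexp (-y ^ 2 / 2))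
    (u' := fun x : ℝ => (n+1 : ℝ) * x ^ n) (v' := fun x : ℝ => -x * rexp (-x ^ 2 / 2))
    (fun x _ => hu x) (fun x _ => hv x) ?_ ?_ ?_
  · have e1 : ∀ x : ℝ, (fun y : ℝ => y ^ (n+1)) x * (-x * rexp (-x ^ 2 / 2))
        = -(x ^ (n+2) * rexp (-x ^ 2 / 2)) := by intro x; ring
    rw [show (fun x : ℝ => (fun y : ℝ => y ^ (n+1)) x * (-x * rexp (-x ^ 2 / 2))) =
      (fun x : ℝ => -(x ^ (n+2) * rexp (-x ^ 2 / 2))) from funext e1] at key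
    rw [integral_neg] at key
    have := neg_injective key
    rw [this]
    simp only [mul_assoc]
    rw [integral_const_mul]
  · show Integrable (fun x : ℝ => x ^ (n+1) * (-x * rexp (-x ^ 2 / 2)))
    have : (fun x : ℝ => x ^ (n+1) * (-x * rexp (-x ^ 2 / 2)))
        = fun x : ℝ => -(x ^ (n+2) * rexp (-x ^ 2 / 2)) := by funext x; ring
    rw [this]
    exact (integrable_pow_gauss (n+2)).neg
  · show Integrable (fun x : ℝ => ((n:ℝ)+1) * x ^ n * rexp (-x ^ 2 / 2))
    have : (fun x : ℝ => ((n:ℝ)+1) * x ^ n * rexp (-x ^ 2 / 2))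
        = fun x : ℝ => ((n:ℝ)+1) * (x ^ n * rexp (-x ^ 2 / 2)) := by funext x; ring
    rw [this]
    exact (integrable_pow_gauss n).const_mul _
  · show Integrable (fun x : ℝ => x ^ (n+1) * rexp (-x ^ 2 / 2))
    exact integrable_pow_gauss (n+1)

lemma gauss_int_zero : (∫ x : ℝ, x ^ 0 * rexp (-x ^ 2 / 2)) = Real.sqrt (2 * π) := by
  simp only [pow_zero, one_mul]
  have h := integral_gaussian (1/2 : ℝ)
  have : (fun x : ℝ => rexp (-x ^ 2 / 2)) = fun x : ℝ => rexp (-(1/2 : ℝ) * x ^ 2) := by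
    funext x; ring_nf
  rw [this, h]
  rw [show π / (1/2 : ℝ) = 2 * π by ring]

lemma gauss_int_one : (∫ x : ℝ, x ^ 1 * rexp (-x ^ 2 / 2)) = 0 := by
  have hv : ∀ x : ℝ, HasDerivAt (fun y : ℝ => -rexp (-y ^ 2 / 2)) (x ^ 1 * rexp (-x ^ 2 / 2)) x := by
    intro x
    have h1 : HasDerivAt (fun y : ℝ => -y ^ 2 / 2) (-x) x := by
      have := ((hasDerivAt_pow 2 x).neg).div_const 2
      simpa using this.congr_deriv (by push_cast; ring)
    exact (h1.exp.neg).congr_deriv (by rw [pow_one]; ring)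
  have hsq_top : Tendsto (fun x : ℝ => x ^ 2) atTop atTop := tendsto_pow_atTop (by norm_num)
  have hsq_bot : Tendsto (fun x : ℝ => x ^ 2) atBot atTop := by
    have := hsq_top.comp tendsto_neg_atBot_atTop
    exact this.congr (fun x => by simp [neg_pow])
  have hlim : ∀ l : Filter ℝ, Tendsto (fun x : ℝ => x ^ 2) l atTop →
      Tendsto (fun x : ℝ => -rexp (-x ^ 2 / 2)) l (nhds 0) := by
    intro l hl
    rw [show (0:ℝ) = -0 by norm_num]
    apply Tendsto.neg
    apply Real.tendsto_exp_atBot.comp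
    have h2 : Tendsto (fun x : ℝ => -x ^ 2) l atBot := by
      have := tendsto_neg_atTop_atBot.comp hl
      exact this.congr (fun x => rfl)
    exact h2.atBot_div_const (by norm_num)
  have := integral_of_hasDerivAt_of_tendsto hv (integrable_pow_gauss 1)
    (hlim atBot hsq_bot) (hlim atTop hsq_top)
  rw [this]; ring

lemma gaussianPDFReal_std (x : ℝ) :
    gaussianPDFReal 0 1 x = (Real.sqrt (2 * π))⁻¹ * rexp (-x ^ 2 / 2) := by
  simp [gaussianPDFReal]

lemma gaussianReal_std_eq :
    gaussianReal 0 1 = volume.withDensity (fun x => ((Real.toNNReal (gaussianPDFReal 0 1 x) : ℝ≥0) : ℝ≥0∞)) := by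
  rw [gaussianReal_of_var_ne_zero 0 one_ne_zero]
  rfl

lemma integral_gaussianReal_std (g : ℝ → ℝ) :
    ∫ x, g x ∂(gaussianReal 0 1) = ∫ x, gaussianPDFReal 0 1 x * g x := by
  rw [gaussianReal_std_eq, integral_withDensity_eq_integral_smul
    (measurable_gaussianPDFReal 0 1).real_toNNReal g]
  congr 1
  funext x
  rw [NNReal.smul_def, smul_eq_mul, Real.coe_toNNReal _ (gaussianPDFReal_nonneg 0 1 x)]

lemma gmom_eq (n : ℕ) :
    ∫ x, x ^ n ∂(gaussianReal 0 1)
      = (Real.sqrt (2 * π))⁻¹ * ∫ x : ℝ, x ^ n * rexp (-x ^ 2 / 2) := by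
  rw [integral_gaussianReal_std]
  rw [show (fun x : ℝ => gaussianPDFReal 0 1 x * x ^ n)
    = fun x : ℝ => (Real.sqrt (2 * π))⁻¹ * (x ^ n * rexp (-x ^ 2 / 2)) from
    funext fun x => by rw [gaussianPDFReal_std]; ring]
  rw [integral_const_mul]

lemma sqrt_two_pi_pos : (0:ℝ) < Real.sqrt (2 * π) := by
  apply Real.sqrt_pos.mpr
  positivity

lemma gmom_even (k : ℕ) : ∫ x, x ^ (2 * k) ∂(gaussianReal 0 1) = dfac k := by
  induction k with
  | zero =>
    rw [gmom_eq, Nat.mul_zero, gauss_int_zero, dfac_zero,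
      inv_mul_cancel₀ sqrt_two_pi_pos.ne']
  | succ k ih =>
    rw [gmom_eq] at ih ⊢
    rw [show 2 * (k + 1) = 2 * k + 2 by ring, gauss_int_rec, dfac_succ, ← ih]
    push_cast
    ring

lemma gmom_odd (k : ℕ) : ∫ x, x ^ (2 * k + 1) ∂(gaussianReal 0 1) = 0 := by
  induction k with
  | zero => rw [gmom_eq, Nat.mul_zero, Nat.zero_add, gauss_int_one, mul_zero]
  | succ k ih =>
    rw [gmom_eq] at ih ⊢
    rw [show 2 * (k + 1) + 1 = 2 * k + 1 + 2 by ring, gauss_int_rec]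
    have h : ∫ x : ℝ, x ^ (2 * k + 1) * rexp (-x ^ 2 / 2) = 0 := by
      rcases mul_eq_zero.mp ih with h | h
      · exact absurd h (by positivity)
      · exact h
    rw [h, mul_zero, mul_zero]

lemma integrable_pow_gaussianReal (n : ℕ) :
    Integrable (fun x : ℝ => x ^ n) (gaussianReal 0 1) := by
  rw [gaussianReal_std_eq]
  rw [integrable_withDensity_iff_integrable_smul
    (measurable_gaussianPDFReal 0 1).real_toNNReal]
  have : (fun x : ℝ => (Real.toNNReal (gaussianPDFReal 0 1 x) : ℝ≥0) • x ^ n)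
      = fun x : ℝ => (Real.sqrt (2 * π))⁻¹ * (x ^ n * rexp (-x ^ 2 / 2)) := by
    funext x
    rw [NNReal.smul_def, smul_eq_mul, Real.coe_toNNReal _ (gaussianPDFReal_nonneg 0 1 x),
      gaussianPDFReal_std]
    ring
  rw [this]
  exact (integrable_pow_gauss n).const_mul _

section OmegaSide

variable {Ω : Type*} [MeasurableSpace Ω] {μ : Measure Ω} [IsProbabilityMeasure μ]

lemma map_pow_integral {X : Ω → ℝ} (hX : Measurable X) (hmap : μ.map X = gaussianReal 0 1)
    (n : ℕ) : ∫ ω, X ω ^ n ∂μ = ∫ x, x ^ n ∂(gaussianReal 0 1) := by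
  rw [← hmap, integral_map hX.aemeasurable]
  exact (measurable_id.pow_const n).aestronglyMeasurable

lemma map_pow_integrable {X : Ω → ℝ} (hX : Measurable X) (hmap : μ.map X = gaussianReal 0 1)
    (n : ℕ) : Integrable (fun ω => X ω ^ n) μ := by
  have h := integrable_pow_gaussianReal n
  rw [← hmap] at h
  exact (integrable_map_measure (measurable_id.pow_const n).aestronglyMeasurable
    hX.aemeasurable).mp h

variable {l1 l2 : Ω → ℝ} (h1 : Measurable l1) (h2 : Measurable l2)
  (hind : IndepFun l1 l2 μ)
  (hl1 : μ.map l1 = gaussianReal 0 1) (hl2 : μ.map l2 = gaussianReal 0 1)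

include h1 h2 hind hl1 hl2 in
lemma prod_pow_integrable (a b : ℕ) :
    Integrable (fun ω => l1 ω ^ a * l2 ω ^ b) μ := by
  have := (hind.comp (measurable_id.pow_const a) (measurable_id.pow_const b)).integrable_mul
    (map_pow_integrable h1 hl1 a) (map_pow_integrable h2 hl2 b)
  exact this

include h1 h2 hind hl1 hl2 in
lemma prod_pow_integral (a b : ℕ) :
    ∫ ω, l1 ω ^ a * l2 ω ^ b ∂μ
      = (∫ x, x ^ a ∂(gaussianReal 0 1)) * ∫ x, x ^ b ∂(gaussianReal 0 1) := by
  have := (hind.comp (measurable_id.pow_const a) (measurable_id.pow_const b)).integral_fun_mul_eq_mul_integral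
    (map_pow_integrable h1 hl1 a).aestronglyMeasurable (map_pow_integrable h2 hl2 b).aestronglyMeasurable
  rw [← map_pow_integral h1 hl1 a, ← map_pow_integral h2 hl2 b]
  exact this

include h1 h2 hind hl1 hl2 in
lemma W_sq_moment {ρ s : ℝ} (hρs : ρ ^ 2 + s ^ 2 = 1) (k : ℕ) :
    ∫ ω, (ρ * l1 ω + s * l2 ω) ^ (2 * k) ∂μ = dfac k := by
  set mj : ℕ → ℝ := fun n => ∫ x, x ^ n ∂(gaussianReal 0 1) with hmj
  set g : ℕ → ℝ := fun j => ρ ^ j * s ^ (2*k-j) * (mj j * mj (2*k-j)) * (Nat.choose (2*k) j)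
    with hg
  have expand : (fun ω => (ρ * l1 ω + s * l2 ω) ^ (2*k))
      = fun ω => ∑ j ∈ Finset.range (2*k+1),
          ρ ^ j * s ^ (2*k-j) * (l1 ω ^ j * l2 ω ^ (2*k-j)) * (Nat.choose (2*k) j) := by
    funext ω
    rw [add_pow]
    apply Finset.sum_congr rfl
    intro j _
    rw [mul_pow, mul_pow]
    ring
  rw [expand, integral_finset_sum]
  swap
  · intro j _
    exact ((prod_pow_integrable h1 h2 hind hl1 hl2 j (2*k-j)).const_mul
      (ρ ^ j * s ^ (2*k-j))).mul_const _
  have hterm : ∀ j ∈ Finset.range (2*k+1),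
      ∫ ω, ρ ^ j * s ^ (2*k-j) * (l1 ω ^ j * l2 ω ^ (2*k-j)) * (Nat.choose (2*k) j) ∂μ
        = g j := by
    intro j _
    rw [integral_mul_const, integral_const_mul, prod_pow_integral h1 h2 hind hl1 hl2]
  rw [Finset.sum_congr rfl hterm]
  have hodd : ∀ j, ¬ Even j → g j = 0 := by
    intro j hj
    obtain ⟨t, ht⟩ := Nat.odd_iff.mpr (Nat.not_even_iff.mp hj)
    have : mj j = 0 := by rw [hmj, ht]; exact gmom_odd t
    simp [hg, this]
  have hsplit : ∑ j ∈ Finset.range (2*k+1), g j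
      = ∑ j ∈ (Finset.range (2*k+1)).filter (fun j => Even j), g j := by
    symm
    apply Finset.sum_filter_of_ne
    intro j _ hgj
    by_contra h
    exact hgj (hodd j h)
  rw [hsplit]
  have hbij : ∑ j ∈ (Finset.range (2*k+1)).filter (fun j => Even j), g j
      = ∑ i ∈ Finset.range (k+1), g (2*i) := by
    apply Finset.sum_nbij' (i := fun j => j / 2) (j := fun i => 2 * i)
    · intro a ha
      simp only [Finset.mem_filter, Finset.mem_range, Nat.even_iff] at ha
      simp only [Finset.mem_range]
      omega
    · intro a ha
      simp only [Finset.mem_range] at ha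
      simp only [Finset.mem_filter, Finset.mem_range, Nat.even_iff]
      omega
    · intro a ha
      simp only [Finset.mem_filter, Finset.mem_range, Nat.even_iff] at ha
      omega
    · intro a _
      omega
    · intro a ha
      simp only [Finset.mem_filter, Finset.mem_range, Nat.even_iff] at ha
      congr 1
      omega
  rw [hbij]
  have heval : ∀ i ∈ Finset.range (k+1),
      g (2*i) = dfac k * ((ρ ^ 2) ^ i * (s ^ 2) ^ (k-i) * (Nat.choose k i)) := by
    intro i hi
    have hik : i ≤ k := by simpa [Nat.lt_succ_iff] using Finset.mem_range.mp hi
    have hsub : 2*k - 2*i = 2*(k-i) := by omega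
    rw [hg]
    simp only
    rw [hsub, hmj]
    simp only
    rw [gmom_even i, gmom_even (k-i)]
    have hid := dfac_identity (i := i) (k := k) hik
    calc ρ ^ (2*i) * s ^ (2*(k-i)) * (dfac i * dfac (k-i)) * (Nat.choose (2*k) (2*i) : ℝ)
        = ρ ^ (2*i) * s ^ (2*(k-i)) * ((Nat.choose (2*k) (2*i) : ℝ) * dfac i * dfac (k-i)) := by
          ring
      _ = ρ ^ (2*i) * s ^ (2*(k-i)) * ((Nat.choose k i : ℝ) * dfac k) := by rw [hid]
      _ = dfac k * ((ρ ^ 2) ^ i * (s ^ 2) ^ (k-i) * (Nat.choose k i)) := by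
          rw [pow_mul ρ 2 i, pow_mul s 2 (k-i)]
          ring
  rw [Finset.sum_congr rfl heval, ← Finset.mul_sum]
  have : ∑ i ∈ Finset.range (k+1), (ρ ^ 2) ^ i * (s ^ 2) ^ (k-i) * (Nat.choose k i : ℝ)
      = (ρ ^ 2 + s ^ 2) ^ k := (add_pow (ρ^2) (s^2) k).symm
  rw [this, hρs, one_pow, mul_one]

end OmegaSide

lemma cs_bound {Ω : Type*} [MeasurableSpace Ω] {μ : Measure Ω} [IsProbabilityMeasure μ]
    {f g : Ω → ℝ} (hf : Measurable f) (hg : Measurable g)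
    (hf2 : Integrable (fun ω => f ω ^ 2) μ) (hg2 : Integrable (fun ω => g ω ^ 2) μ) :
    ∫ ω, |f ω| * |g ω| ∂μ
      ≤ Real.sqrt (∫ ω, f ω ^ 2 ∂μ) * Real.sqrt (∫ ω, g ω ^ 2 ∂μ) := by
  have hmf : MemLp (fun ω => |f ω|) (ENNReal.ofReal 2) μ := by
    rw [show ENNReal.ofReal 2 = 2 by norm_num [ENNReal.ofReal_ofNat]]
    exact (memLp_two_iff_integrable_sq hf.abs.aestronglyMeasurable).mpr
      (by simpa [sq_abs] using hf2)
  have hmg : MemLp (fun ω => |g ω|) (ENNReal.ofReal 2) μ := by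
    rw [show ENNReal.ofReal 2 = 2 by norm_num [ENNReal.ofReal_ofNat]]
    exact (memLp_two_iff_integrable_sq hg.abs.aestronglyMeasurable).mpr
      (by simpa [sq_abs] using hg2)
  have h := integral_mul_le_Lp_mul_Lq_of_nonneg (μ := μ) (p := 2) (q := 2)
    ⟨by norm_num, by norm_num, by norm_num⟩ (ae_of_all _ fun ω => abs_nonneg (f ω))
    (ae_of_all _ fun ω => abs_nonneg (g ω)) hmf hmg
  have e1 : (fun ω => |f ω| ^ (2:ℝ)) = fun ω => f ω ^ 2 := by
    funext ω
    rw [show (2:ℝ) = ((2:ℕ):ℝ) by norm_num, Real.rpow_natCast, sq_abs]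
  have e2 : (fun ω => |g ω| ^ (2:ℝ)) = fun ω => g ω ^ 2 := by
    funext ω
    rw [show (2:ℝ) = ((2:ℕ):ℝ) by norm_num, Real.rpow_natCast, sq_abs]
  rw [e1, e2] at h
  rw [Real.sqrt_eq_rpow, Real.sqrt_eq_rpow]
  exact h

section OmegaSide2

variable {Ω : Type*} [MeasurableSpace Ω] {μ : Measure Ω} [IsProbabilityMeasure μ]
  {l1 l2 : Ω → ℝ} (h1 : Measurable l1) (h2 : Measurable l2)
  (hind : IndepFun l1 l2 μ)
  (hl1 : μ.map l1 = gaussianReal 0 1) (hl2 : μ.map l2 = gaussianReal 0 1)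

include h1 h2 hind hl1 hl2 in
lemma W_pow_integrable (ρ s : ℝ) (n : ℕ) :
    Integrable (fun ω => (ρ * l1 ω + s * l2 ω) ^ n) μ := by
  have e : (fun ω => (ρ * l1 ω + s * l2 ω) ^ n)
      = fun ω => ∑ j ∈ Finset.range (n+1),
          ρ ^ j * s ^ (n-j) * (l1 ω ^ j * l2 ω ^ (n-j)) * (Nat.choose n j) := by
    funext ω
    rw [add_pow]
    apply Finset.sum_congr rfl
    intro j _
    rw [mul_pow, mul_pow]
    ring
  rw [e]
  exact integrable_finset_sum _ (fun j _ =>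
    ((prod_pow_integrable h1 h2 hind hl1 hl2 j (n-j)).const_mul _).mul_const _)

end OmegaSide2


/-- (Moment and sub-exponential bound.)  Let `λ₁, λ₂` be
independent standard normal random variables, `ρ ∈ [-1, 1]`, and
`Z = |λ₁| |ρ λ₁ + √(1-ρ²) λ₂|`.  Then for every integer `q ≥ 2`:
`E[Z^q] ≤ 2^q q!` and `(E|Z - E Z|^q)^{1/q} ≤ 2.91 q`. -/
theorem projected_error_moment_bound {Ω : Type*} [MeasurableSpace Ω]
    (μ : Measure Ω) [IsProbabilityMeasure μ]
    (l1 l2 : Ω → ℝ) (h1 : Measurable l1) (h2 : Measurable l2)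
    (hind : IndepFun l1 l2 μ)
    (hl1 : μ.map l1 = gaussianReal 0 1) (hl2 : μ.map l2 = gaussianReal 0 1)
    (ρ : ℝ) (hρ : ρ ∈ Set.Icc (-1 : ℝ) 1)
    (Z : Ω → ℝ)
    (hZ : Z = fun ω => |l1 ω| * |ρ * l1 ω + Real.sqrt (1 - ρ ^ 2) * l2 ω|)
    (q : ℕ) (hq : 2 ≤ q) :
    (∫ ω, (Z ω) ^ q ∂μ) ≤ 2 ^ q * (Nat.factorial q) ∧
    (∫ ω, |Z ω - ∫ ω', Z ω' ∂μ| ^ q ∂μ) ^ ((1 : ℝ) / q) ≤ 2.91 * q := by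
  obtain ⟨hρ1, hρ2⟩ := hρ
  set s : ℝ := Real.sqrt (1 - ρ ^ 2) with hs
  have hρsq : ρ ^ 2 ≤ 1 := by nlinarith
  have hρs : ρ ^ 2 + s ^ 2 = 1 := by
    rw [hs, Real.sq_sqrt (by linarith)]
    ring
  set W : Ω → ℝ := fun ω => ρ * l1 ω + s * l2 ω with hWdef
  have hWm : Measurable W := (h1.const_mul ρ).add (h2.const_mul s)
  have hZW : ∀ ω, Z ω = |l1 ω| * |W ω| := fun ω => by rw [hZ]
  have hZnn : ∀ ω, 0 ≤ Z ω := fun ω => by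
    rw [hZW ω]; positivity
  have hZm : Measurable Z := by
    rw [hZ]; exact h1.abs.mul ((h1.const_mul ρ).add (h2.const_mul s)).abs
  -- moment bound via Cauchy-Schwarz
  have EZk : ∀ k : ℕ, ∫ ω, Z ω ^ k ∂μ ≤ dfac k := by
    intro k
    have e : (fun ω => Z ω ^ k) = fun ω => |l1 ω ^ k| * |W ω ^ k| := by
      funext ω
      rw [hZW ω, mul_pow, abs_pow, abs_pow]
    have el1 : (fun ω => (l1 ω ^ k) ^ 2) = fun ω => l1 ω ^ (2 * k) := by
      funext ω; rw [← pow_mul, mul_comm]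
    have eW : (fun ω => (W ω ^ k) ^ 2) = fun ω => W ω ^ (2 * k) := by
      funext ω; rw [← pow_mul, mul_comm]
    have hI1 : Integrable (fun ω => (l1 ω ^ k) ^ 2) μ := by
      rw [el1]; exact map_pow_integrable h1 hl1 (2 * k)
    have hIW : Integrable (fun ω => (W ω ^ k) ^ 2) μ := by
      rw [eW]; exact W_pow_integrable h1 h2 hind hl1 hl2 ρ s (2 * k)
    have h := cs_bound (hf := h1.pow_const k) (hg := hWm.pow_const k) hI1 hIW
    rw [e]
    refine h.trans ?_
    have v1 : ∫ ω, (l1 ω ^ k) ^ 2 ∂μ = dfac k := by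
      rw [el1, map_pow_integral h1 hl1 (2 * k), gmom_even k]
    have v2 : ∫ ω, (W ω ^ k) ^ 2 ∂μ = dfac k := by
      rw [eW]
      exact W_sq_moment h1 h2 hind hl1 hl2 hρs k
    rw [v1, v2, Real.mul_self_sqrt (dfac_pos k).le]
  -- integrability of Z ^ k
  have IntZk : ∀ k : ℕ, Integrable (fun ω => Z ω ^ k) μ := by
    intro k
    refine Integrable.mono' (g := fun ω => (l1 ω ^ (2 * k) + W ω ^ (2 * k)) / 2)
      (((map_pow_integrable h1 hl1 (2 * k)).add
        (W_pow_integrable h1 h2 hind hl1 hl2 ρ s (2 * k))).div_const 2)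
      (hZm.pow_const k).aestronglyMeasurable (ae_of_all _ fun ω => ?_)
    rw [Real.norm_eq_abs, abs_of_nonneg (pow_nonneg (hZnn ω) k), hZW ω, mul_pow]
    show |l1 ω| ^ k * |W ω| ^ k ≤ (l1 ω ^ (2 * k) + W ω ^ (2 * k)) / 2
    have e1 : (|l1 ω| ^ k) ^ 2 = l1 ω ^ (2 * k) := by
      rw [← pow_mul, mul_comm k 2, Even.pow_abs ⟨k, two_mul k⟩]
    have e2 : (|W ω| ^ k) ^ 2 = W ω ^ (2 * k) := by
      rw [← pow_mul, mul_comm k 2, Even.pow_abs ⟨k, two_mul k⟩]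
    rw [← e1, ← e2]
    nlinarith [sq_nonneg (|l1 ω| ^ k - |W ω| ^ k), pow_nonneg (abs_nonneg (l1 ω)) k,
      pow_nonneg (abs_nonneg (W ω)) k]
  constructor
  · exact (EZk q).trans (dfac_le q)
  -- second part
  set c : ℝ := ∫ ω', Z ω' ∂μ with hc
  have hc0 : 0 ≤ c := integral_nonneg fun ω => hZnn ω
  have hc1 : c ≤ 1 := by
    have : c = ∫ ω, Z ω ^ 1 ∂μ := by simp [hc]
    rw [this]
    refine (EZk 1).trans ?_
    rw [dfac_succ, dfac_zero]
    norm_num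
  have key : (∫ ω, |Z ω - c| ^ q ∂μ) ≤ (Nat.factorial q : ℝ) * 2 ^ (q + 1) := by
    have hint : Integrable (fun ω => (Z ω + c) ^ q) μ := by
      have e : (fun ω => (Z ω + c) ^ q)
          = fun ω => ∑ k ∈ Finset.range (q+1), Z ω ^ k * c ^ (q-k) * (Nat.choose q k) := by
        funext ω; rw [add_pow]
      rw [e]
      exact integrable_finset_sum _ (fun k _ => ((IntZk k).mul_const _).mul_const _)
    have hmono : ∫ ω, |Z ω - c| ^ q ∂μ ≤ ∫ ω, (Z ω + c) ^ q ∂μ := by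
      refine integral_mono_of_nonneg (ae_of_all _ fun ω => by positivity) hint
        (ae_of_all _ fun ω => ?_)
      refine pow_le_pow_left₀ (abs_nonneg _) ?_ q
      refine (abs_sub (Z ω) c).trans ?_
      rw [abs_of_nonneg (hZnn ω), abs_of_nonneg hc0]
    refine hmono.trans ?_
    have e : (fun ω => (Z ω + c) ^ q)
        = fun ω => ∑ k ∈ Finset.range (q+1), Z ω ^ k * c ^ (q-k) * (Nat.choose q k) := by
      funext ω; rw [add_pow]
    rw [e, integral_finset_sum _ (fun k _ => ((IntZk k).mul_const _).mul_const _)]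
    have hterm : ∀ k ∈ Finset.range (q+1),
        ∫ ω, Z ω ^ k * c ^ (q-k) * (Nat.choose q k) ∂μ ≤ (Nat.factorial q : ℝ) * 2 ^ k := by
      intro k hk
      have hkq : k ≤ q := by simpa [Nat.lt_succ_iff] using Finset.mem_range.mp hk
      rw [integral_mul_const, integral_mul_const]
      have hZknn : 0 ≤ ∫ ω, Z ω ^ k ∂μ := integral_nonneg fun ω => pow_nonneg (hZnn ω) k
      have hck : c ^ (q-k) ≤ 1 := pow_le_one₀ hc0 hc1
      have hCf : (Nat.choose q k : ℝ) * (Nat.factorial k : ℝ) ≤ (Nat.factorial q : ℝ) := by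
        have := Nat.choose_mul_factorial_mul_factorial hkq
        have h2 : Nat.choose q k * Nat.factorial k ≤ Nat.factorial q := by
          calc Nat.choose q k * Nat.factorial k
              ≤ Nat.choose q k * Nat.factorial k * Nat.factorial (q - k) :=
                Nat.le_mul_of_pos_right _ (Nat.factorial_pos _)
            _ = Nat.factorial q := this
        exact_mod_cast h2
      calc (∫ ω, Z ω ^ k ∂μ) * c ^ (q-k) * (Nat.choose q k : ℝ)
          ≤ (2 ^ k * (Nat.factorial k : ℝ)) * 1 * (Nat.choose q k : ℝ) := by
            have h1' := (EZk k).trans (dfac_le k)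
            gcongr
        _ = (Nat.choose q k : ℝ) * (Nat.factorial k : ℝ) * 2 ^ k := by ring
        _ ≤ (Nat.factorial q : ℝ) * 2 ^ k := by
            have : (0:ℝ) ≤ 2 ^ k := by positivity
            nlinarith
    refine (Finset.sum_le_sum hterm).trans ?_
    rw [← Finset.mul_sum]
    have hgeom : ∑ k ∈ Finset.range (q+1), (2:ℝ) ^ k = 2 ^ (q+1) - 1 := by
      have := geom_sum_eq (by norm_num : (2:ℝ) ≠ 1) (q+1)
      rw [this]; norm_num
    rw [hgeom]
    have : (0:ℝ) ≤ (Nat.factorial q : ℝ) := by positivity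
    nlinarith
  -- numeric conclusion
  have hnum : (Nat.factorial q : ℝ) * 2 ^ (q + 1) ≤ (2.91 * q) ^ q := by
    have hfq : (Nat.factorial q : ℝ) ≤ (q : ℝ) ^ q := by
      exact_mod_cast Nat.factorial_le_pow q
    have h1455 : (1.455:ℝ) ^ 2 ≤ 1.455 ^ q := pow_le_pow_right₀ (by norm_num) hq
    have h291 : ((2.91 : ℝ) * q) ^ q = 2 ^ q * 1.455 ^ q * (q:ℝ) ^ q := by
      rw [show (2.91:ℝ) = 2 * 1.455 by norm_num, mul_pow, mul_pow]
    rw [h291]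
    calc (Nat.factorial q : ℝ) * 2 ^ (q + 1) = 2 ^ q * 2 * (Nat.factorial q : ℝ) := by ring
      _ ≤ 2 ^ q * (1.455 ^ 2) * (q:ℝ) ^ q := by
          have h2 : (2:ℝ) ≤ 1.455 ^ 2 := by norm_num
          have hp : (0:ℝ) ≤ 2 ^ q := by positivity
          have hfnn : (0:ℝ) ≤ (Nat.factorial q : ℝ) := by positivity
          nlinarith
      _ ≤ 2 ^ q * 1.455 ^ q * (q:ℝ) ^ q := by
          gcongr
  have hq0 : (q : ℝ) ≠ 0 := by
    have : 0 < q := by omega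
    exact_mod_cast this.ne'
  have hA0 : 0 ≤ ∫ ω, |Z ω - c| ^ q ∂μ := integral_nonneg fun ω => by positivity
  have hfinal := Real.rpow_le_rpow hA0 (key.trans hnum) (by positivity : (0:ℝ) ≤ 1 / q)
  refine hfinal.trans_eq ?_
  rw [← Real.rpow_natCast ((2.91:ℝ) * q) q, ← Real.rpow_mul (by positivity), mul_one_div,
    div_self hq0, Real.rpow_one]
end
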